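/- arXiv:2007.00863 — 6 statements merged into one kernel-verified Lean document; each statement's English description precedes it below -/
import Mathlib

section
/- Let ν be a real-valued function defined on (at least) all open subsets of ℝⁿ which is finite, nonnegative, nondecreasing (ν(U) ≤ ν(V) whenever U ⊆ V are open) and countably superadditive (ν(⋃ⱼ Uⱼ) ≥ Σⱼ ν(Uⱼ) for every countable disjoint family of open sets Uⱼ). Let τ ≥ 0 and set S := { x ∈ ℝⁿ : limsup_{ρ→0⁺} ρ^{−τ} ν(B(x,ρ)) = ∞ }. Then H^τ(S) = 0; in particular the Hausdorff dimension of S is at most τ. -/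
open MeasureTheory Metric Set Filter
open scoped ENNReal NNReal Topology

noncomputable section

abbrev Euc (n : ℕ) := EuclideanSpace ℝ (Fin n)

variable {n : ℕ}

/-- Distance to the boundary of `Ω`. -/
def dB (Ω : Set (Euc n)) (x : Euc n) : ℝ := infDist x (frontier Ω)

/-- `Ψ(x) = B(x, d(x)/2)`. -/
def PsiB (Ω : Set (Euc n)) (x : Euc n) : Set (Euc n) := ball x (dB Ω x / 2)

/-- `Φ(x) = B(x, d(x)/6)`. -/
def PhiB (Ω : Set (Euc n)) (x : Euc n) : Set (Euc n) := ball x (dB Ω x / 6)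

/-- The integrand of `ν(·;u)`. -/
def nuInt (Ω : Set (Euc n)) (s : Euc n → ℝ) (p : ℝ) (u : Euc n → ℝ) (x : Euc n) : ℝ :=
  (⨍ y in PsiB Ω x, |u y - u x|) ^ p * dB Ω x ^ (-(p * s x))

/-- `ν(E;u)`. -/
def nuM (Ω : Set (Euc n)) (s : Euc n → ℝ) (p : ℝ) (u : Euc n → ℝ) (E : Set (Euc n)) : ℝ :=
  ∫ x in Ω ∩ E, nuInt Ω s p u x

/-- Membership in the nonlocal space `𝒩^{s,p}(Ω)`: `u ∈ L¹(Ω)` and `ν(Ω;u) < ∞`. -/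
def MemN (Ω : Set (Euc n)) (s : Euc n → ℝ) (p : ℝ) (u : Euc n → ℝ) : Prop :=
  IntegrableOn u Ω volume ∧ IntegrableOn (nuInt Ω s p u) Ω volume

/-- `g(x;u)`, the mean of `u` over `Φ(x)`. -/
def gFun (Ω : Set (Euc n)) (u : Euc n → ℝ) (x : Euc n) : ℝ := ⨍ y in PhiB Ω x, u y

/-- The approach region `Q^θ_λ(xb)`. -/
def Qreg (Ω : Set (Euc n)) (lam θ : ℝ) (xb : Euc n) : Set (Euc n) :=
  {x | x ∈ Ω ∧ (lam * dist xb x) ^ θ < dB Ω x}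

/-- `Q` is an `(η,θ)`-corkscrew region for `xb` with radius `δ₀`. -/
def IsCorkscrew (Ω Q : Set (Euc n)) (xb : Euc n) (η θ δ₀ : ℝ) : Prop :=
  ∀ δ : ℝ, 0 < δ → δ ≤ δ₀ →
    ∃ x ∈ Q, η * δ < dist xb x ∧ dist xb x < δ ∧ (η * δ) ^ θ < dB Ω x

/-- `E` is `(C,θ)`-connected to `xb`, with radius `ρ₀` and gauge `ε`. -/
def ConnectedTo (Ω E : Set (Euc n)) (xb : Euc n) (C θ ρ₀ : ℝ) (ε : ℝ → ℝ) : Prop :=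
  ∀ lam : ℝ, 0 < lam → lam < 1 →
    0 < ε lam ∧ ε lam ≤ lam ∧
      ∀ ρ : ℝ, 0 < ρ → ρ ≤ ρ₀ → ∀ x ∈ E ∩ ball xb ρ, ∀ x' ∈ E ∩ ball xb ρ,
        (lam * ρ) ^ θ ≤ dB Ω x → (lam * ρ) ^ θ ≤ dB Ω x' →
        ∃ γ : ℝ → Euc n, ContinuousOn γ (Icc 0 1) ∧ γ 0 = x ∧ γ 1 = x' ∧
          (∀ τ ∈ Icc (0:ℝ) 1, γ τ ∈ E ∧ ε lam * ρ ^ θ ≤ dB Ω (γ τ)) ∧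
          eVariationOn γ (Icc 0 1) ≤ ENNReal.ofReal (C * ρ)

/-- The piecewise bilinear function `α(s,θ)`. -/
def alphaFun (n : ℕ) (p sv θ : ℝ) : ℝ :=
  if p * sv - n ≤ p - 1 then p * (1 - θ) + (p * sv - n) * θ
  else (1 - θ) + (p * sv - n)

/-- `s̲_δ(xb)`. -/
def sLow (Ω : Set (Euc n)) (s : Euc n → ℝ) (xb : Euc n) (δ : ℝ) : ℝ :=
  sInf (s '' (Ω ∩ ball xb δ))

/-- `α̲_δ(xb)`. -/
def alphaLow (Ω : Set (Euc n)) (s : Euc n → ℝ) (p : ℝ) (θΓ : Euc n → ℝ)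
    (xb : Euc n) (δ : ℝ) : ℝ :=
  alphaFun n p (sLow Ω s xb δ) (θΓ xb)

/-- `α̲_0(xb) = lim_{δ → 0⁺} α̲_δ(xb)`. -/
def alphaLow0 (Ω : Set (Euc n)) (s : Euc n → ℝ) (p : ℝ) (θΓ : Euc n → ℝ) (xb : Euc n) : ℝ :=
  limUnder (𝓝[>] (0:ℝ)) (fun δ => alphaLow Ω s p θΓ xb δ)

/-- `Γ_τ`: points of `Γ` where `limsup_{ρ→0⁺} ρ^{-τ} ν(B(xb,ρ);u) < ∞`. -/
def GammaTau (Ω : Set (Euc n)) (s : Euc n → ℝ) (p : ℝ) (u : Euc n → ℝ)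
    (Γ : Set (Euc n)) (τ : ℝ) : Set (Euc n) :=
  {xb ∈ Γ | ∃ M : ℝ, ∀ᶠ ρ in 𝓝[>] (0:ℝ), ρ ^ (-τ) * nuM Ω s p u (ball xb ρ) ≤ M}

/-- `M_τ(xb) = sup_{0<ρ≤δΓ} ρ^{-τ} ν(B(xb,ρ);u)`. -/
def Mtau (Ω : Set (Euc n)) (s : Euc n → ℝ) (p : ℝ) (u : Euc n → ℝ)
    (δΓ τ : ℝ) (xb : Euc n) : ℝ :=
  sSup ((fun ρ => ρ ^ (-τ) * nuM Ω s p u (ball xb ρ)) '' Ioc 0 δΓ)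

/-- Auxiliary: finite superadditivity over an arbitrary finite disjoint family of open sets. -/
lemma finsum_nu_le {n : ℕ} (ν : Set (Euc n) → ℝ)
    (hnonneg : ∀ U : Set (Euc n), IsOpen U → 0 ≤ ν U)
    (hmono : ∀ U V : Set (Euc n), IsOpen U → IsOpen V → U ⊆ V → ν U ≤ ν V)
    (hsuper : ∀ U : ℕ → Set (Euc n), (∀ j, IsOpen (U j)) → Pairwise (Function.onFun Disjoint U) →
      ∀ N : ℕ, ∑ j ∈ Finset.range N, ν (U j) ≤ ν (⋃ j, U j))
    {ι : Type*} (s : Finset ι) (f : ι → Set (Euc n))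
    (hopen : ∀ i ∈ s, IsOpen (f i))
    (hdisj : (s : Set ι).PairwiseDisjoint f) :
    ∑ i ∈ s, ν (f i) ≤ ν Set.univ := by
  classical
  set k := s.card with hk
  set e := s.equivFin with he
  set U : ℕ → Set (Euc n) := fun j => if h : j < k then f ((e.symm ⟨j, h⟩ : s) : ι) else ∅
    with hU
  have hUopen : ∀ j, IsOpen (U j) := by
    intro j
    by_cases h : j < k
    · simp only [hU, dif_pos h]; exact hopen _ (Finset.coe_mem _)
    · simp only [hU, dif_neg h]; exact isOpen_empty
  have hUdisj : Pairwise (Function.onFun Disjoint U) := by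
    intro i j hij
    by_cases hi : i < k
    · by_cases hj : j < k
      · have hne : ((e.symm ⟨i, hi⟩ : s) : ι) ≠ ((e.symm ⟨j, hj⟩ : s) : ι) := by
          intro h
          have h2 : (⟨i, hi⟩ : Fin k) = ⟨j, hj⟩ :=
            e.symm.injective (Subtype.coe_injective h)
          exact hij (by simpa using congrArg Fin.val h2)
        have := hdisj (Finset.mem_coe.2 (Finset.coe_mem _))
          (Finset.mem_coe.2 (Finset.coe_mem _)) hne
        simpa only [Function.onFun, hU, dif_pos hi, dif_pos hj] using this
      · simp only [Function.onFun, hU, dif_neg hj]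
        exact disjoint_empty _
    · simp only [Function.onFun, hU, dif_neg hi]
      exact empty_disjoint _
  have h1 := hsuper U hUopen hUdisj k
  have h2 : ν (⋃ j, U j) ≤ ν Set.univ :=
    hmono _ _ (isOpen_iUnion hUopen) isOpen_univ (subset_univ _)
  have h3 : ∑ j ∈ Finset.range k, ν (U j) = ∑ i ∈ s, ν (f i) := by
    rw [← Fin.sum_univ_eq_sum_range (fun j => ν (U j)) k]
    have hval : ∀ j : Fin k, ν (U j) = ν (f ((e.symm j : s) : ι)) := by
      intro j
      simp only [hU, dif_pos j.isLt, Fin.eta]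
    rw [Finset.sum_congr rfl fun j _ => hval j]
    rw [Equiv.sum_comp e.symm (fun b : s => ν (f (b : ι)))]
    exact Finset.sum_coe_sort s fun b => ν (f b)
  linarith

/-- Auxiliary: diameter bound for dilated closed balls. -/
lemma diam_cb_le {n : ℕ} (x : Euc n) {a : ℝ} (ha : 0 ≤ a) :
    EMetric.diam (closedBall x (5 * a)) ≤ ENNReal.ofReal (10 * a) := by
  rw [← Metric.emetric_closedBall (x := x) (by positivity : (0:ℝ) ≤ 5 * a)]
  refine le_trans EMetric.diam_closedBall ?_
  rw [show (10 * a : ℝ) = 2 * (5 * a) by ring,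
    ENNReal.ofReal_mul (by norm_num : (0:ℝ) ≤ 2)]
  gcongr
  simp

/-- Auxiliary: the Vitali covering step for Giusti's lemma. -/
lemma cover_lemma {n : ℕ} (τ : ℝ) (hτ : 0 ≤ τ) (ν : Set (Euc n) → ℝ)
    (hnonneg : ∀ U : Set (Euc n), IsOpen U → 0 ≤ ν U)
    (hmono : ∀ U V : Set (Euc n), IsOpen U → IsOpen V → U ⊆ V → ν U ≤ ν V)
    (hsuper : ∀ U : ℕ → Set (Euc n), (∀ j, IsOpen (U j)) → Pairwise (Function.onFun Disjoint U) →
      ∀ N : ℕ, ∑ j ∈ Finset.range N, ν (U j) ≤ ν (⋃ j, U j))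
    (M δ : ℝ) (hM : 0 < M) (hδ : 0 < δ) :
    ∃ (u : Set (Euc n)) (r : Euc n → ℝ), u.Countable ∧
      ({x : Euc n | ∀ M : ℝ, ∃ᶠ ρ in 𝓝[>] (0:ℝ), M < ρ ^ (-τ) * ν (ball x ρ)}
        ⊆ ⋃ b ∈ u, closedBall b (5 * r b)) ∧
      (∀ b ∈ u, 0 < r b ∧ r b ≤ δ) ∧
      ∑' b : u, EMetric.diam (closedBall (b : Euc n) (5 * r (b : Euc n))) ^ τ
        ≤ ENNReal.ofReal ((10:ℝ) ^ τ / M * ν Set.univ) := by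
  classical
  set S := {x : Euc n | ∀ M : ℝ, ∃ᶠ ρ in 𝓝[>] (0:ℝ), M < ρ ^ (-τ) * ν (ball x ρ)} with hSdef
  have hP : ∀ x ∈ S, ∃ ρ : ℝ, 0 < ρ ∧ ρ ≤ δ ∧ M * ρ ^ τ < ν (ball x ρ) := by
    intro x hx
    obtain ⟨ρ, h1, h2⟩ :=
      ((hx M).and_eventually (Ioc_mem_nhdsGT_of_mem ⟨le_refl (0:ℝ), hδ⟩)).exists
    refine ⟨ρ, h2.1, h2.2, ?_⟩
    have hρ : (0:ℝ) < ρ := h2.1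
    have hρτ : (0:ℝ) < ρ ^ τ := Real.rpow_pos_of_pos hρ τ
    rw [Real.rpow_neg hρ.le, inv_mul_eq_div, lt_div_iff₀ hρτ] at h1
    exact h1
  set P : Euc n → Prop := fun x => ∃ ρ : ℝ, 0 < ρ ∧ ρ ≤ δ ∧ M * ρ ^ τ < ν (ball x ρ) with hPdef
  set r : Euc n → ℝ := fun x => if h : P x then h.choose else δ with hrdef
  have hrS : ∀ x ∈ S, 0 < r x ∧ r x ≤ δ ∧ M * (r x) ^ τ < ν (ball x (r x)) := by
    intro x hx
    have h : P x := hP x hx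
    simp only [hrdef, dif_pos h]
    exact h.choose_spec
  have hrδ : ∀ x, r x ≤ δ := by
    intro x
    by_cases h : P x
    · simp only [hrdef, dif_pos h]; exact h.choose_spec.2.1
    · simp only [hrdef, dif_neg h]
      exact le_refl δ
  obtain ⟨u, uS, udisj, hcov⟩ :=
    Vitali.exists_disjoint_subfamily_covering_enlargement_closedBall S (fun a => a) r δ
      (fun a _ => hrδ a) 5 (by norm_num)
  have hucnt : u.Countable := by
    apply udisj.countable_of_nonempty_interior
    intro b hb
    have hrb := (hrS b (uS hb)).1
    exact (Metric.nonempty_ball.2 hrb).mono ball_subset_interior_closedBall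
  refine ⟨u, r, hucnt, ?_, fun b hb => ⟨(hrS b (uS hb)).1, (hrS b (uS hb)).2.1⟩, ?_⟩
  · intro a ha
    obtain ⟨b, hb, hsub⟩ := hcov a ha
    exact mem_biUnion hb (hsub (mem_closedBall_self (hrS a ha).1.le))
  · have key : ∀ b : u, EMetric.diam (closedBall (b : Euc n) (5 * r (b : Euc n))) ^ τ
        ≤ ENNReal.ofReal ((10:ℝ) ^ τ / M) * ENNReal.ofReal (ν (ball (b : Euc n) (r b))) := by
      intro b
      obtain ⟨hb1, hb2, hb3⟩ := hrS b (uS b.2)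
      have hd := diam_cb_le (b : Euc n) hb1.le
      have h10τ : (0:ℝ) ≤ (10:ℝ) ^ τ := Real.rpow_nonneg (by norm_num) τ
      calc EMetric.diam (closedBall (b : Euc n) (5 * r (b : Euc n))) ^ τ
          ≤ (ENNReal.ofReal (10 * r (b : Euc n))) ^ τ := ENNReal.rpow_le_rpow hd hτ
        _ = ENNReal.ofReal ((10 * r (b : Euc n)) ^ τ) :=
            ENNReal.ofReal_rpow_of_pos (by positivity)
        _ ≤ ENNReal.ofReal ((10:ℝ) ^ τ / M * ν (ball (b : Euc n) (r b))) := by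
            apply ENNReal.ofReal_le_ofReal
            have h1 : (10 * r (b : Euc n)) ^ τ = (10:ℝ) ^ τ * (r (b : Euc n)) ^ τ :=
              Real.mul_rpow (by norm_num) hb1.le
            have h2 : (r (b : Euc n)) ^ τ ≤ ν (ball (b : Euc n) (r b)) / M := by
              rw [le_div_iff₀ hM]
              nlinarith
            calc (10 * r (b : Euc n)) ^ τ = (10:ℝ) ^ τ * (r (b : Euc n)) ^ τ := h1
              _ ≤ (10:ℝ) ^ τ * (ν (ball (b : Euc n) (r b)) / M) := by
                  exact mul_le_mul_of_nonneg_left h2 h10τ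
              _ = (10:ℝ) ^ τ / M * ν (ball (b : Euc n) (r b)) := by ring
        _ = ENNReal.ofReal ((10:ℝ) ^ τ / M) * ENNReal.ofReal (ν (ball (b : Euc n) (r b))) :=
            ENNReal.ofReal_mul (by positivity)
    have hsum : ∑' b : u, ENNReal.ofReal (ν (ball (b : Euc n) (r b)))
        ≤ ENNReal.ofReal (ν Set.univ) := by
      rw [ENNReal.tsum_eq_iSup_sum]
      apply iSup_le
      intro s
      rw [← ENNReal.ofReal_sum_of_nonneg (fun b _ => hnonneg _ isOpen_ball)]
      apply ENNReal.ofReal_le_ofReal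
      refine finsum_nu_le ν hnonneg hmono hsuper s
        (fun b : u => ball (b : Euc n) (r b)) (fun b _ => isOpen_ball) ?_
      intro b _ c _ hbc
      have hd : Disjoint (closedBall (b : Euc n) (r b)) (closedBall (c : Euc n) (r c)) :=
        udisj b.2 c.2 fun h => hbc (Subtype.coe_injective h)
      exact hd.mono ball_subset_closedBall ball_subset_closedBall
    calc ∑' b : u, EMetric.diam (closedBall (b : Euc n) (5 * r (b : Euc n))) ^ τ
        ≤ ∑' b : u, ENNReal.ofReal ((10:ℝ) ^ τ / M) *
            ENNReal.ofReal (ν (ball (b : Euc n) (r b))) := ENNReal.tsum_le_tsum key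
      _ = ENNReal.ofReal ((10:ℝ) ^ τ / M) *
            ∑' b : u, ENNReal.ofReal (ν (ball (b : Euc n) (r b))) := ENNReal.tsum_mul_left
      _ ≤ ENNReal.ofReal ((10:ℝ) ^ τ / M) * ENNReal.ofReal (ν Set.univ) :=
            mul_le_mul_right hsum _
      _ = ENNReal.ofReal ((10:ℝ) ^ τ / M * ν Set.univ) := by
            rw [ENNReal.ofReal_mul (by positivity)]

/-- Modified Giusti's lemma. If `ν` is a finite, nonnegative, nondecreasing and
countably superadditive set function defined on the open subsets of `ℝⁿ`, and `τ ≥ 0`, then the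
set `S` of points where `limsup_{ρ→0⁺} ρ^{-τ} ν(B(x,ρ)) = ∞` is `H^τ`-null, and in particular its
Hausdorff dimension is at most `τ`. -/
theorem statement0 (n : ℕ) (τ : ℝ) (hτ : 0 ≤ τ)
    (ν : Set (Euc n) → ℝ)
    (hnonneg : ∀ U : Set (Euc n), IsOpen U → 0 ≤ ν U)
    (hmono : ∀ U V : Set (Euc n), IsOpen U → IsOpen V → U ⊆ V → ν U ≤ ν V)
    (hsuper : ∀ U : ℕ → Set (Euc n), (∀ j, IsOpen (U j)) → Pairwise (Function.onFun Disjoint U) →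
      ∀ N : ℕ, ∑ j ∈ Finset.range N, ν (U j) ≤ ν (⋃ j, U j)) :
    μH[τ] {x : Euc n | ∀ M : ℝ, ∃ᶠ ρ in 𝓝[>] (0:ℝ), M < ρ ^ (-τ) * ν (ball x ρ)} = 0 ∧
    dimH {x : Euc n | ∀ M : ℝ, ∃ᶠ ρ in 𝓝[>] (0:ℝ), M < ρ ^ (-τ) * ν (ball x ρ)}
      ≤ ENNReal.ofReal τ := by
  set S := {x : Euc n | ∀ M : ℝ, ∃ᶠ ρ in 𝓝[>] (0:ℝ), M < ρ ^ (-τ) * ν (ball x ρ)} with hSdef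
  have key : ∀ M : ℝ, 0 < M → μH[τ] S ≤ ENNReal.ofReal ((10:ℝ) ^ τ / M * ν Set.univ) := by
    intro M hM
    choose u r hcnt hcov hr hsum using fun m : ℕ =>
      cover_lemma τ hτ ν hnonneg hmono hsuper M (1 / ((m:ℝ) + 1)) hM (by positivity)
    haveI : ∀ m : ℕ, Countable (u m) := fun m => (hcnt m).to_subtype
    have hlim : Tendsto (fun m : ℕ => ENNReal.ofReal (10 * (1 / ((m:ℝ) + 1)))) atTop (𝓝 0) := by
      have h0 : Tendsto (fun m : ℕ => 10 * (1 / ((m:ℝ) + 1))) atTop (𝓝 0) := by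
        simpa using tendsto_one_div_add_atTop_nhds_zero_nat.const_mul (10:ℝ)
      simpa using ENNReal.tendsto_ofReal h0
    have hbound := Measure.hausdorffMeasure_le_liminf_tsum (ι := fun m : ℕ => ↥(u m)) τ S
      (l := atTop) (fun m : ℕ => ENNReal.ofReal (10 * (1 / ((m:ℝ) + 1)))) hlim
      (fun m (b : u m) => closedBall (b : Euc n) (5 * r m (b : Euc n)))
      (Eventually.of_forall fun m => ?_) (Eventually.of_forall fun m => ?_)
    · refine hbound.trans ?_
      calc liminf (fun m : ℕ => ∑' b : u m,
              EMetric.diam (closedBall (b : Euc n) (5 * r m (b : Euc n))) ^ τ) atTop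
          ≤ liminf (fun _ : ℕ => ENNReal.ofReal ((10:ℝ) ^ τ / M * ν Set.univ)) atTop :=
            liminf_le_liminf (Eventually.of_forall fun m => hsum m)
        _ = ENNReal.ofReal ((10:ℝ) ^ τ / M * ν Set.univ) := liminf_const _
    · intro b
      have hb := hr m (b : Euc n) b.2
      refine (diam_cb_le (b : Euc n) hb.1.le).trans ?_
      apply ENNReal.ofReal_le_ofReal
      nlinarith [hb.2]
    · intro x hx
      obtain ⟨b, hb⟩ := mem_iUnion.1 (hcov m hx)
      obtain ⟨hbu, hbx⟩ := mem_iUnion.1 hb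
      exact mem_iUnion.2 ⟨⟨b, hbu⟩, hbx⟩
  have hzero : μH[τ] S = 0 := by
    have htend : Tendsto (fun m : ℕ =>
        ENNReal.ofReal ((10:ℝ) ^ τ / ((m:ℝ) + 1) * ν Set.univ)) atTop (𝓝 0) := by
      have h0 : Tendsto (fun m : ℕ => (10:ℝ) ^ τ / ((m:ℝ) + 1) * ν Set.univ) atTop (𝓝 0) := by
        have h1 : Tendsto (fun m : ℕ => ((10:ℝ) ^ τ * ν Set.univ) * (1 / ((m:ℝ) + 1)))
            atTop (𝓝 0) := by
          simpa using tendsto_one_div_add_atTop_nhds_zero_nat.const_mul ((10:ℝ) ^ τ * ν Set.univ)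
        refine h1.congr fun m => by ring
      simpa using ENNReal.tendsto_ofReal h0
    have hle : μH[τ] S ≤ 0 :=
      ge_of_tendsto' htend fun m => key ((m:ℝ) + 1) (by positivity)
    exact le_antisymm hle zero_le
  refine ⟨hzero, ?_⟩
  have hcoe : ((τ.toNNReal : ℝ≥0) : ℝ) = τ := Real.coe_toNNReal τ hτ
  have hne : μH[(τ.toNNReal : ℝ)] S ≠ ⊤ := by
    rw [hcoe, hzero]
    exact ENNReal.zero_ne_top
  have := dimH_le_of_hausdorffMeasure_ne_top hne
  rwa [show (τ.toNNReal : ℝ≥0∞) = ENNReal.ofReal τ from rfl] at this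
end
end

section
/- Let t ≥ 0, A ≥ 1, 1 ≤ p < ∞ and β > 0, and let Γ ⊆ ℝⁿ be a Borel set that is lower Ahlfors regular: A^{−1} ρ^t ≤ H^t(Γ ∩ B(x̄,ρ)) for all x̄ ∈ Γ and 0 < ρ ≤ diam(Γ). Let v ∈ W^{β,p}(Γ) and define v_β(x̄) := ( ∫_{Γ∩B(x̄,1)} |v(z) − v(x̄)|ᵖ / ‖z − x̄‖^{t+βp} dH^t(z) )^{1/p}. Then v_β ∈ Lᵖ(Γ, H^t), and there is a constant c (depending only on n, p, t, β and A) such that |v(ȳ) − v(x̄)| ≤ c ‖ȳ − x̄‖^β ( v_β(ȳ) + v_β(x̄) ) for all x̄, ȳ ∈ Γ with ‖ȳ − x̄‖ ≤ 1/2. -/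
open MeasureTheory Metric Set Filter
open scoped ENNReal NNReal Topology

noncomputable section

variable {n : ℕ}

/-- `v_β(xb)` for the fractional-smoothness pointwise bound. -/
def vbeta (t β p : ℝ) (Γ : Set (Euc n)) (v : Euc n → ℝ) (xb : Euc n) : ℝ≥0∞ :=
  (∫⁻ z in Γ ∩ ball xb 1,
      ENNReal.ofReal (|v z - v xb| ^ p / dist z xb ^ (t + β * p)) ∂μH[t]) ^ (1 / p)


/-- Auxiliary estimate: the `Lᵖ`-mass of `|v z - v w|` over a small set near `w`
is controlled by `v_β(w)`. -/
lemma vbeta_aux {n : ℕ} (t β p : ℝ) (hp : 1 ≤ p) (hβ : 0 < β) (ht : 0 ≤ t)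
    (Γ : Set (Euc n)) (v : Euc n → ℝ) (w : Euc n) (s : Set (Euc n))
    (hsub : s ⊆ Γ ∩ ball w 1) (R : ℝ) (hR : 0 ≤ R) (hdist : ∀ z ∈ s, dist z w ≤ R)
    (hsm : MeasurableSet s) :
    ∫⁻ z in s, ENNReal.ofReal (|v z - v w| ^ p) ∂μH[t] ≤
      ENNReal.ofReal (R ^ (t + β * p)) * vbeta t β p Γ v w ^ p := by
  have hp0 : p ≠ 0 := by positivity
  have he : 0 ≤ t + β * p := by positivity
  have hvb : vbeta t β p Γ v w ^ p =
      ∫⁻ z in Γ ∩ ball w 1,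
        ENNReal.ofReal (|v z - v w| ^ p / dist z w ^ (t + β * p)) ∂μH[t] := by
    rw [vbeta, one_div, ENNReal.rpow_inv_rpow hp0]
  calc ∫⁻ z in s, ENNReal.ofReal (|v z - v w| ^ p) ∂μH[t]
      ≤ ∫⁻ z in s, ENNReal.ofReal (R ^ (t + β * p)) *
          ENNReal.ofReal (|v z - v w| ^ p / dist z w ^ (t + β * p)) ∂μH[t] := by
        refine lintegral_mono_ae (ae_restrict_of_forall_mem hsm fun z hz => ?_)
        rw [← ENNReal.ofReal_mul (by positivity)]
        refine ENNReal.ofReal_le_ofReal ?_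
        rcases eq_or_lt_of_le (dist_nonneg : (0:ℝ) ≤ dist z w) with hd | hd
        · have hzw : z = w := by
            rw [← dist_eq_zero]; exact hd.symm
          subst hzw
          rw [sub_self, abs_zero, Real.zero_rpow hp0]
          positivity
        · have h1 : dist z w ^ (t + β * p) ≤ R ^ (t + β * p) :=
            Real.rpow_le_rpow hd.le (hdist z hz) he
          have h2 : (0:ℝ) < dist z w ^ (t + β * p) := Real.rpow_pos_of_pos hd _
          calc |v z - v w| ^ p
              = |v z - v w| ^ p / dist z w ^ (t + β * p) * dist z w ^ (t + β * p) :=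
                (div_mul_cancel₀ _ h2.ne').symm
            _ ≤ |v z - v w| ^ p / dist z w ^ (t + β * p) * R ^ (t + β * p) :=
                mul_le_mul_of_nonneg_left h1 (by positivity)
            _ = R ^ (t + β * p) * (|v z - v w| ^ p / dist z w ^ (t + β * p)) := mul_comm _ _
    _ = ENNReal.ofReal (R ^ (t + β * p)) *
          ∫⁻ z in s, ENNReal.ofReal (|v z - v w| ^ p / dist z w ^ (t + β * p)) ∂μH[t] :=
        lintegral_const_mul' _ _ ENNReal.ofReal_ne_top
    _ ≤ ENNReal.ofReal (R ^ (t + β * p)) *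
          ∫⁻ z in Γ ∩ ball w 1,
            ENNReal.ofReal (|v z - v w| ^ p / dist z w ^ (t + β * p)) ∂μH[t] :=
        mul_le_mul_right (lintegral_mono' (Measure.restrict_mono hsub le_rfl) le_rfl) _
    _ = ENNReal.ofReal (R ^ (t + β * p)) * vbeta t β p Γ v w ^ p := by rw [hvb]

set_option maxHeartbeats 1000000 in
/-- On a lower Ahlfors-regular set `Γ`, any `v ∈ W^{β,p}(Γ)` satisfies
`v_β ∈ Lᵖ(Γ,H^t)` and the pointwise Hölder-type bound
`|v(yb) − v(xb)| ≤ c ‖yb − xb‖^β (v_β(yb) + v_β(xb))` for `‖yb − xb‖ ≤ 1/2`. -/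
theorem statement2 (n : ℕ) (t A p β : ℝ) (ht : 0 ≤ t) (hA : 1 ≤ A) (hp : 1 ≤ p) (hβ : 0 < β) :
    ∃ c : ℝ, 0 < c ∧
      ∀ (Γ : Set (Euc n)), MeasurableSet Γ →
        (∀ xb ∈ Γ, ∀ ρ : ℝ, 0 < ρ → ENNReal.ofReal ρ ≤ EMetric.diam Γ →
          ENNReal.ofReal (A⁻¹ * ρ ^ t) ≤ μH[t] (Γ ∩ ball xb ρ)) →
        ∀ v : Euc n → ℝ, AEMeasurable v (μH[t].restrict Γ) →
          (∫⁻ x in Γ, ENNReal.ofReal (|v x| ^ p) ∂μH[t]) < ⊤ →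
          (∫⁻ x in Γ, ∫⁻ y in Γ,
              ENNReal.ofReal (|v y - v x| ^ p / dist y x ^ (t + β * p)) ∂μH[t] ∂μH[t]) < ⊤ →
          (∫⁻ xb in Γ, vbeta t β p Γ v xb ^ p ∂μH[t]) < ⊤ ∧
          ∀ xb ∈ Γ, ∀ yb ∈ Γ, dist yb xb ≤ 1 / 2 →
            ENNReal.ofReal (|v yb - v xb|) ≤
              ENNReal.ofReal (c * dist yb xb ^ β) *
                (vbeta t β p Γ v yb + vbeta t β p Γ v xb) := by
  have hp0 : p ≠ 0 := by positivity
  have hA0 : (0:ℝ) < A := lt_of_lt_of_le one_pos hA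
  have he : 0 ≤ t + β * p := by positivity
  set K : ℝ := A * 2 ^ (p + (t + β * p)) with hK
  have hKpos : 0 < K := by positivity
  refine ⟨2 * K ^ (1 / p), by positivity, ?_⟩
  intro Γ hΓ hreg v hv hLp hW
  constructor
  · -- integrability of `v_β ^ p`
    have key : ∀ xb, vbeta t β p Γ v xb ^ p =
        ∫⁻ z in Γ ∩ ball xb 1,
          ENNReal.ofReal (|v z - v xb| ^ p / dist z xb ^ (t + β * p)) ∂μH[t] := by
      intro xb; rw [vbeta, one_div, ENNReal.rpow_inv_rpow hp0]
    refine lt_of_le_of_lt ?_ hW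
    refine lintegral_mono fun xb => ?_
    rw [key]
    exact lintegral_mono' (Measure.restrict_mono inter_subset_left le_rfl) le_rfl
  · intro xb hxb yb hyb hd
    set r : ℝ := dist yb xb with hrdef
    rcases eq_or_lt_of_le (dist_nonneg : (0:ℝ) ≤ r) with hr | hr
    · have hxy : yb = xb := by rw [← dist_eq_zero]; exact hr.symm
      simp [hxy]
    set Vx := vbeta t β p Γ v xb with hVxdef
    set Vy := vbeta t β p Γ v yb with hVydef
    have hcr : 0 < 2 * K ^ (1 / p) * r ^ β := by positivity
    have hne : ENNReal.ofReal (2 * K ^ (1 / p) * r ^ β) ≠ 0 :=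
      (ENNReal.ofReal_pos.mpr hcr).ne'
    rcases eq_or_ne Vy ⊤ with hVy | hVy
    · rw [hVy, top_add, ENNReal.mul_top hne]
      exact le_top
    rcases eq_or_ne Vx ⊤ with hVx | hVx
    · rw [hVx, add_top, ENNReal.mul_top hne]
      exact le_top
    -- the set over which we average
    set s : Set (Euc n) := Γ ∩ ball xb r with hsdef
    have hsm : MeasurableSet s := hΓ.inter measurableSet_ball
    have hs_sub_x : s ⊆ Γ ∩ ball xb 1 := by
      refine inter_subset_inter le_rfl (ball_subset_ball ?_)
      linarith
    have hs_sub_y : s ⊆ Γ ∩ ball yb 1 := by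
      rintro z ⟨hzΓ, hzb⟩
      refine ⟨hzΓ, ?_⟩
      have h1 : dist z yb ≤ dist z xb + dist xb yb := dist_triangle _ _ _
      have h2 : dist xb yb = r := dist_comm xb yb
      simp only [mem_ball] at hzb ⊢
      linarith
    have hdx : ∀ z ∈ s, dist z xb ≤ r := fun z hz => le_of_lt hz.2
    have hdy : ∀ z ∈ s, dist z yb ≤ 2 * r := by
      rintro z ⟨hzΓ, hzb⟩
      have h1 : dist z yb ≤ dist z xb + dist xb yb := dist_triangle _ _ _
      have h2 : dist xb yb = r := dist_comm xb yb
      simp only [mem_ball] at hzb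
      linarith
    -- lower Ahlfors bound
    have hm : ENNReal.ofReal (A⁻¹ * r ^ t) ≤ μH[t] s := by
      refine hreg xb hxb r hr ?_
      calc ENNReal.ofReal r = edist yb xb := (edist_dist yb xb).symm
        _ ≤ EMetric.diam Γ := EMetric.edist_le_diam_of_mem hyb hxb
    -- the two averaged integrals
    have hx : ∫⁻ z in s, ENNReal.ofReal (|v z - v xb| ^ p) ∂μH[t] ≤
        ENNReal.ofReal (r ^ (t + β * p)) * Vx ^ p :=
      vbeta_aux t β p hp hβ ht Γ v xb s hs_sub_x r hr.le hdx hsm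
    have hy : ∫⁻ z in s, ENNReal.ofReal (|v z - v yb| ^ p) ∂μH[t] ≤
        ENNReal.ofReal ((2 * r) ^ (t + β * p)) * Vy ^ p :=
      vbeta_aux t β p hp hβ ht Γ v yb s hs_sub_y (2 * r) (by linarith) hdy hsm
    -- pointwise splitting
    have hptw : ∀ z : Euc n, ENNReal.ofReal (|v yb - v xb| ^ p) ≤
        ENNReal.ofReal ((2:ℝ) ^ p) *
          (ENNReal.ofReal (|v z - v yb| ^ p) + ENNReal.ofReal (|v z - v xb| ^ p)) := by
      intro z
      rw [← ENNReal.ofReal_add (by positivity) (by positivity),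
        ← ENNReal.ofReal_mul (by positivity)]
      refine ENNReal.ofReal_le_ofReal ?_
      set a := |v yb - v xb|
      set b := |v z - v yb|
      set c := |v z - v xb|
      have ha : 0 ≤ a := abs_nonneg _
      have hb : 0 ≤ b := abs_nonneg _
      have hc : 0 ≤ c := abs_nonneg _
      have h1 : a ≤ b + c := by
        have h0 := abs_sub_le (v yb) (v z) (v xb)
        have h2 : |v yb - v z| = b := abs_sub_comm _ _
        rw [h2] at h0
        exact h0
      have h2 : a ≤ 2 * max b c := by
        rcases le_total b c with h | h
        · rw [max_eq_right h]; linarith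
        · rw [max_eq_left h]; linarith
      have h3 : a ^ p ≤ (2 * max b c) ^ p :=
        Real.rpow_le_rpow ha h2 (by positivity)
      have h4 : (2 * max b c) ^ p = 2 ^ p * (max b c) ^ p :=
        Real.mul_rpow (by norm_num) (le_max_of_le_left hb)
      have h5 : (max b c) ^ p ≤ b ^ p + c ^ p := by
        rcases le_total b c with h | h
        · rw [max_eq_right h]
          have hb2 : 0 ≤ b ^ p := by positivity
          linarith
        · rw [max_eq_left h]
          have hc2 : 0 ≤ c ^ p := by positivity
          linarith
      calc a ^ p ≤ 2 ^ p * (max b c) ^ p := by rw [← h4]; exact h3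
        _ ≤ 2 ^ p * (b ^ p + c ^ p) :=
          mul_le_mul_of_nonneg_left h5 (by positivity)
    -- measurability for splitting the integral
    have hv_s : AEMeasurable v (μH[t].restrict s) :=
      hv.mono_measure (Measure.restrict_mono inter_subset_left le_rfl)
    have hmeas_y : AEMeasurable (fun z => ENNReal.ofReal (|v z - v yb| ^ p))
        (μH[t].restrict s) := by
      have hcont : Continuous (fun x : ℝ => ENNReal.ofReal (|x - v yb| ^ p)) := by
        refine ENNReal.continuous_ofReal.comp ?_
        exact (Real.continuous_rpow_const (by positivity)).comp
          ((continuous_id.sub continuous_const).abs)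
      exact hcont.measurable.comp_aemeasurable hv_s
    -- main chain
    have hmain : ENNReal.ofReal (|v yb - v xb| ^ p) * μH[t] s ≤
        ENNReal.ofReal ((2:ℝ) ^ p) *
          (ENNReal.ofReal ((2 * r) ^ (t + β * p)) * Vy ^ p +
            ENNReal.ofReal (r ^ (t + β * p)) * Vx ^ p) := by
      calc ENNReal.ofReal (|v yb - v xb| ^ p) * μH[t] s
          = ∫⁻ _ in s, ENNReal.ofReal (|v yb - v xb| ^ p) ∂μH[t] :=
            (setLIntegral_const s _).symm
        _ ≤ ∫⁻ z in s, ENNReal.ofReal ((2:ℝ) ^ p) *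
              (ENNReal.ofReal (|v z - v yb| ^ p) + ENNReal.ofReal (|v z - v xb| ^ p))
              ∂μH[t] :=
            lintegral_mono fun z => hptw z
        _ = ENNReal.ofReal ((2:ℝ) ^ p) *
              ∫⁻ z in s, (ENNReal.ofReal (|v z - v yb| ^ p) +
                ENNReal.ofReal (|v z - v xb| ^ p)) ∂μH[t] :=
            lintegral_const_mul' _ _ ENNReal.ofReal_ne_top
        _ = ENNReal.ofReal ((2:ℝ) ^ p) *
              ((∫⁻ z in s, ENNReal.ofReal (|v z - v yb| ^ p) ∂μH[t]) +
                ∫⁻ z in s, ENNReal.ofReal (|v z - v xb| ^ p) ∂μH[t]) := by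
            rw [lintegral_add_left' hmeas_y]
        _ ≤ ENNReal.ofReal ((2:ℝ) ^ p) *
              (ENNReal.ofReal ((2 * r) ^ (t + β * p)) * Vy ^ p +
                ENNReal.ofReal (r ^ (t + β * p)) * Vx ^ p) :=
            mul_le_mul_right (add_le_add hy hx) _
    -- pass to real numbers
    set Sx : ℝ := Vx.toReal with hSx
    set Sy : ℝ := Vy.toReal with hSy
    have hSx0 : 0 ≤ Sx := ENNReal.toReal_nonneg
    have hSy0 : 0 ≤ Sy := ENNReal.toReal_nonneg
    have hVxp : Vx ^ p = ENNReal.ofReal (Sx ^ p) := by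
      rw [hSx, ← ENNReal.ofReal_rpow_of_nonneg hSx0 (by positivity),
        ENNReal.ofReal_toReal hVx]
    have hVyp : Vy ^ p = ENNReal.ofReal (Sy ^ p) := by
      rw [hSy, ← ENNReal.ofReal_rpow_of_nonneg hSy0 (by positivity),
        ENNReal.ofReal_toReal hVy]
    have hreal : |v yb - v xb| ^ p * (A⁻¹ * r ^ t) ≤
        (2:ℝ) ^ p * ((2 * r) ^ (t + β * p) * Sy ^ p +
          r ^ (t + β * p) * Sx ^ p) := by
      rw [← ENNReal.ofReal_le_ofReal_iff (by positivity)]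
      calc ENNReal.ofReal (|v yb - v xb| ^ p * (A⁻¹ * r ^ t))
          = ENNReal.ofReal (|v yb - v xb| ^ p) * ENNReal.ofReal (A⁻¹ * r ^ t) :=
            ENNReal.ofReal_mul (by positivity)
        _ ≤ ENNReal.ofReal (|v yb - v xb| ^ p) * μH[t] s :=
            mul_le_mul_right hm _
        _ ≤ ENNReal.ofReal ((2:ℝ) ^ p) *
              (ENNReal.ofReal ((2 * r) ^ (t + β * p)) * Vy ^ p +
                ENNReal.ofReal (r ^ (t + β * p)) * Vx ^ p) := hmain
        _ = ENNReal.ofReal ((2:ℝ) ^ p * ((2 * r) ^ (t + β * p) * Sy ^ p +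
              r ^ (t + β * p) * Sx ^ p)) := by
            rw [hVxp, hVyp, ← ENNReal.ofReal_mul (by positivity),
              ← ENNReal.ofReal_mul (by positivity),
              ← ENNReal.ofReal_add (by positivity) (by positivity),
              ← ENNReal.ofReal_mul (by positivity)]
    -- real algebra
    have hfin : |v yb - v xb| ≤ (2 * K ^ (1 / p) * r ^ β) * (Sy + Sx) := by
      have hrt : (0:ℝ) < r ^ t := Real.rpow_pos_of_pos hr _
      have hrb : (0:ℝ) < r ^ (β * p) := Real.rpow_pos_of_pos hr _
      have hS0 : 0 ≤ Sy ^ p + Sx ^ p := by positivity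
      have h2r : (2 * r) ^ (t + β * p) = 2 ^ (t + β * p) * r ^ (t + β * p) :=
        Real.mul_rpow (by norm_num) hr.le
      have hre : r ^ (t + β * p) = r ^ t * r ^ (β * p) := Real.rpow_add hr t _
      have h2pe : (2:ℝ) ^ (p + (t + β * p)) = 2 ^ p * 2 ^ (t + β * p) :=
        Real.rpow_add (by norm_num) _ _
      have step1 : |v yb - v xb| ^ p ≤ K * (r ^ (β * p) * (Sy ^ p + Sx ^ p)) := by
        have h6 : |v yb - v xb| ^ p * (A⁻¹ * r ^ t) ≤
            2 ^ p * 2 ^ (t + β * p) * (r ^ t * r ^ (β * p)) * (Sy ^ p + Sx ^ p) := by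
          calc |v yb - v xb| ^ p * (A⁻¹ * r ^ t)
              ≤ (2:ℝ) ^ p * ((2 * r) ^ (t + β * p) * Sy ^ p +
                  r ^ (t + β * p) * Sx ^ p) := hreal
            _ ≤ (2:ℝ) ^ p * ((2 * r) ^ (t + β * p) * Sy ^ p +
                  (2 * r) ^ (t + β * p) * Sx ^ p) := by
                have hle : r ^ (t + β * p) ≤ (2 * r) ^ (t + β * p) :=
                  Real.rpow_le_rpow hr.le (by linarith) he
                have hmul := mul_le_mul_of_nonneg_right hle
                  (by positivity : (0:ℝ) ≤ Sx ^ p)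
                have h2p : (0:ℝ) ≤ 2 ^ p := by positivity
                exact mul_le_mul_of_nonneg_left (add_le_add_right hmul _) h2p
            _ = 2 ^ p * 2 ^ (t + β * p) * (r ^ t * r ^ (β * p)) * (Sy ^ p + Sx ^ p) := by
                rw [h2r, hre]; ring
        have h7 : |v yb - v xb| ^ p ≤
            (2 ^ p * 2 ^ (t + β * p) * (r ^ t * r ^ (β * p)) * (Sy ^ p + Sx ^ p)) /
              (A⁻¹ * r ^ t) := by
          rw [le_div_iff₀ (by positivity)]
          exact h6
        calc |v yb - v xb| ^ p ≤
            (2 ^ p * 2 ^ (t + β * p) * (r ^ t * r ^ (β * p)) * (Sy ^ p + Sx ^ p)) /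
              (A⁻¹ * r ^ t) := h7
          _ = K * (r ^ (β * p) * (Sy ^ p + Sx ^ p)) := by
              rw [hK, h2pe]
              field_simp
      have hstep2 : |v yb - v xb| ≤
          K ^ (1 / p) * (r ^ β * (Sy ^ p + Sx ^ p) ^ (1 / p)) := by
        have h8 : |v yb - v xb| = (|v yb - v xb| ^ p) ^ (1 / p) := by
          rw [one_div, Real.rpow_rpow_inv (abs_nonneg _) hp0]
        rw [h8]
        calc (|v yb - v xb| ^ p) ^ (1 / p)
            ≤ (K * (r ^ (β * p) * (Sy ^ p + Sx ^ p))) ^ (1 / p) :=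
              Real.rpow_le_rpow (by positivity) step1 (by positivity)
          _ = K ^ (1 / p) * ((r ^ (β * p)) ^ (1 / p) * (Sy ^ p + Sx ^ p) ^ (1 / p)) := by
              rw [Real.mul_rpow hKpos.le (by positivity),
                Real.mul_rpow (by positivity) hS0]
          _ = K ^ (1 / p) * (r ^ β * (Sy ^ p + Sx ^ p) ^ (1 / p)) := by
              rw [← Real.rpow_mul hr.le, one_div, mul_inv_cancel_right₀ hp0]
      have hstep3 : (Sy ^ p + Sx ^ p) ^ (1 / p) ≤ 2 * (Sy + Sx) := by
        have h9 : Sy ^ p ≤ (Sy + Sx) ^ p :=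
          Real.rpow_le_rpow hSy0 (by linarith) (by positivity)
        have h10 : Sx ^ p ≤ (Sy + Sx) ^ p :=
          Real.rpow_le_rpow hSx0 (by linarith) (by positivity)
        calc (Sy ^ p + Sx ^ p) ^ (1 / p)
            ≤ (2 * (Sy + Sx) ^ p) ^ (1 / p) :=
              Real.rpow_le_rpow hS0 (by linarith) (by positivity)
          _ = 2 ^ (1 / p) * (Sy + Sx) := by
              rw [Real.mul_rpow (by norm_num) (by positivity), one_div,
                Real.rpow_rpow_inv (by positivity) hp0]
          _ ≤ 2 * (Sy + Sx) := by
              have h11 : (2:ℝ) ^ (1 / p) ≤ 2 ^ (1:ℝ) :=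
                Real.rpow_le_rpow_of_exponent_le (by norm_num)
                  (by rw [div_le_one (by positivity)]; linarith)
              rw [Real.rpow_one] at h11
              exact mul_le_mul_of_nonneg_right h11 (by positivity)
      calc |v yb - v xb|
          ≤ K ^ (1 / p) * (r ^ β * (Sy ^ p + Sx ^ p) ^ (1 / p)) := hstep2
        _ ≤ K ^ (1 / p) * (r ^ β * (2 * (Sy + Sx))) := by
            refine mul_le_mul_of_nonneg_left ?_ (by positivity)
            exact mul_le_mul_of_nonneg_left hstep3 (by positivity)
        _ = 2 * K ^ (1 / p) * r ^ β * (Sy + Sx) := by ring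
    -- conclude in `ℝ≥0∞`
    calc ENNReal.ofReal |v yb - v xb|
        ≤ ENNReal.ofReal ((2 * K ^ (1 / p) * r ^ β) * (Sy + Sx)) :=
          ENNReal.ofReal_le_ofReal hfin
      _ = ENNReal.ofReal (2 * K ^ (1 / p) * r ^ β) * ENNReal.ofReal (Sy + Sx) :=
          ENNReal.ofReal_mul (by positivity)
      _ = ENNReal.ofReal (2 * K ^ (1 / p) * r ^ β) * (Vy + Vx) := by
          rw [ENNReal.ofReal_add hSy0 hSx0, hSy, hSx,
            ENNReal.ofReal_toReal hVy, ENNReal.ofReal_toReal hVx]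
end
end

section
/- Let t ≥ 0, A ≥ 1, 1 ≤ p < ∞ and β > 0, and let Γ ⊆ ℝⁿ be a Borel set that is lower Ahlfors regular: A^{−1} ρ^t ≤ H^t(Γ ∩ B(x̄,ρ)) for all x̄ ∈ Γ and 0 < ρ ≤ diam(Γ). If v ∈ W^{β,p}(Γ), then for every 0 < β′ < β, for H^t-almost every x̄₀ ∈ Γ one has lim_{ρ→0⁺} ρ^{−pβ′} · ⨍_{Γ∩B(x̄₀,ρ)} |v(x̄) − v(x̄₀)|ᵖ dH^t(x̄) = 0, where ⨍ denotes the average with respect to H^t restricted to Γ. -/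
open MeasureTheory Metric Set Filter
open scoped ENNReal NNReal Topology

noncomputable section

variable {n : ℕ}

private lemma aux_rpow_tendsto {c : ℝ} (hc : 0 < c) :
    Tendsto (fun ρ : ℝ => ρ ^ c) (𝓝[>] (0:ℝ)) (𝓝 0) := by
  have h1 : Tendsto (fun ρ : ℝ => Real.exp (Real.log ρ * c)) (𝓝[>] (0:ℝ)) (𝓝 0) :=
    Real.tendsto_exp_atBot.comp (Real.tendsto_log_nhdsGT_zero.atBot_mul_const hc)
  refine Tendsto.congr' ?_ h1
  filter_upwards [self_mem_nhdsWithin] with ρ (hρ : ρ ∈ Ioi (0:ℝ))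
  rw [Real.rpow_def_of_pos hρ]

private lemma aux_sup_ofReal (Aq b : ℝ) (hA : 0 ≤ Aq) (hb : 0 < b) :
    (⨆ k : ℕ, ENNReal.ofReal (Aq / (b + ((k:ℝ)+1)⁻¹))) = ENNReal.ofReal (Aq / b) := by
  have hmono : Monotone fun k : ℕ => ENNReal.ofReal (Aq / (b + ((k:ℝ)+1)⁻¹)) := by
    intro i j hij
    apply ENNReal.ofReal_le_ofReal
    have hij' : ((i:ℝ)+1)⁻¹ ≥ ((j:ℝ)+1)⁻¹ := by
      apply inv_anti₀ (by positivity)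
      exact_mod_cast add_le_add_left (Nat.cast_le.mpr hij) 1
    gcongr
  have hlim : Tendsto (fun k : ℕ => ENNReal.ofReal (Aq / (b + ((k:ℝ)+1)⁻¹))) atTop
      (𝓝 (ENNReal.ofReal (Aq / b))) := by
    apply (ENNReal.continuous_ofReal.tendsto _).comp
    have h0 : Tendsto (fun k : ℕ => b + ((k:ℝ)+1)⁻¹) atTop (𝓝 (b + 0)) := by
      apply tendsto_const_nhds.add
      exact tendsto_one_div_add_atTop_nhds_zero_nat.congr (fun k => one_div _)
    rw [add_zero] at h0
    exact tendsto_const_nhds.div h0 hb.ne'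
  exact tendsto_nhds_unique (tendsto_atTop_iSup hmono) hlim

private lemma aux_meas {n : ℕ} (t p e : ℝ) (hp : 0 < p) (he : 0 < e) (Γ : Set (Euc n))
    (g : Euc n → ℝ) (hg : Measurable g) :
    Measurable (fun x : Euc n =>
      ∫⁻ y in Γ, ENNReal.ofReal (|g y - g x| ^ p / dist y x ^ e) ∂μH[t]) := by
  set Φn : ℕ → ℝ × Euc n → ℝ≥0∞ := fun k q =>
    ∫⁻ y in Γ, ENNReal.ofReal (|g y - q.1| ^ p / (dist y q.2 ^ e + ((k:ℝ)+1)⁻¹)) ∂μH[t]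
    with hΦn
  have integrand_meas : ∀ (k : ℕ) (q : ℝ × Euc n),
      Measurable fun y : Euc n =>
        ENNReal.ofReal (|g y - q.1| ^ p / (dist y q.2 ^ e + ((k:ℝ)+1)⁻¹)) := by
    intro k q
    apply ENNReal.measurable_ofReal.comp
    apply Measurable.div
    · exact (Real.continuous_rpow_const hp.le).measurable.comp (hg.sub measurable_const).abs
    · exact ((Real.continuous_rpow_const he.le).measurable.comp
        (measurable_id.dist measurable_const)).add measurable_const
  have hΦn_lsc : ∀ k, LowerSemicontinuous (Φn k) := by
    intro k q₀ c hc
    by_contra hco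
    rw [Filter.not_eventually] at hco
    have hco' : ∃ᶠ q in 𝓝 q₀, Φn k q ≤ c := hco.mono fun q hq => not_lt.mp hq
    obtain ⟨u, hu, hc'⟩ := exists_seq_forall_of_frequently hco'
    have hcont : ∀ y : Euc n, Tendsto
        (fun m => ENNReal.ofReal (|g y - (u m).1| ^ p / (dist y (u m).2 ^ e + ((k:ℝ)+1)⁻¹)))
        atTop
        (𝓝 (ENNReal.ofReal (|g y - q₀.1| ^ p / (dist y q₀.2 ^ e + ((k:ℝ)+1)⁻¹)))) := by
      intro y
      have hcq : Continuous fun q : ℝ × Euc n =>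
          ENNReal.ofReal (|g y - q.1| ^ p / (dist y q.2 ^ e + ((k:ℝ)+1)⁻¹)) := by
        apply ENNReal.continuous_ofReal.comp
        apply Continuous.div
        · exact (Real.continuous_rpow_const hp.le).comp ((continuous_const.sub continuous_fst).abs)
        · exact ((Real.continuous_rpow_const he.le).comp
            (continuous_const.dist continuous_snd)).add continuous_const
        · intro q; positivity
      exact (hcq.tendsto q₀).comp hu
    have key : Φn k q₀ ≤ c := by
      calc Φn k q₀
          = ∫⁻ y in Γ, Filter.liminf
              (fun m => ENNReal.ofReal
                (|g y - (u m).1| ^ p / (dist y (u m).2 ^ e + ((k:ℝ)+1)⁻¹))) atTop ∂μH[t] := by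
            refine lintegral_congr fun y => ?_
            exact ((hcont y).liminf_eq).symm
        _ ≤ Filter.liminf (fun m => Φn k (u m)) atTop :=
            lintegral_liminf_le (fun m => integrand_meas k (u m))
        _ ≤ c := liminf_le_of_frequently_le' (Frequently.of_forall hc')
    exact absurd key (not_le.mpr hc)
  have hΦ_lsc : LowerSemicontinuous fun q => ⨆ k, Φn k q := lowerSemicontinuous_iSup hΦn_lsc
  have hΦ_meas : Measurable fun q => ⨆ k, Φn k q := hΦ_lsc.measurable
  have hF : Measurable fun x : Euc n => ⨆ k, Φn k (g x, x) :=
    hΦ_meas.comp (hg.prodMk measurable_id)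
  have heq : (fun x : Euc n =>
      ∫⁻ y in Γ, ENNReal.ofReal (|g y - g x| ^ p / dist y x ^ e) ∂μH[t])
      = fun x : Euc n => ⨆ k, Φn k (g x, x) := by
    funext x
    have hmono : Monotone fun (k : ℕ) (y : Euc n) =>
        ENNReal.ofReal (|g y - g x| ^ p / (dist y x ^ e + ((k:ℝ)+1)⁻¹)) := by
      intro i j hij
      intro y
      apply ENNReal.ofReal_le_ofReal
      have hij' : ((i:ℝ)+1)⁻¹ ≥ ((j:ℝ)+1)⁻¹ := by
        apply inv_anti₀ (by positivity)
        exact_mod_cast add_le_add_left (Nat.cast_le.mpr hij) 1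
      gcongr
    rw [show (⨆ k, Φn k (g x, x)) =
        ∫⁻ y in Γ, ⨆ k : ℕ, ENNReal.ofReal (|g y - g x| ^ p / (dist y x ^ e + ((k:ℝ)+1)⁻¹)) ∂μH[t]
      from (lintegral_iSup (fun k => integrand_meas k (g x, x)) hmono).symm]
    refine lintegral_congr fun y => ?_
    rcases eq_or_ne y x with rfl | hyx
    · simp [Real.zero_rpow hp.ne']
    · have hd : 0 < dist y x := dist_pos.mpr hyx
      exact (aux_sup_ofReal _ _ (Real.rpow_nonneg (abs_nonneg _) p)
        (Real.rpow_pos_of_pos hd e)).symm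
  rw [heq]
  exact hF

/-- On a lower Ahlfors-regular set `Γ`, any `v ∈ W^{β,p}(Γ)` satisfies, for each
`0 < β′ < β`, the refined Lebesgue-point property
`ρ^{-pβ′} ⨍_{Γ∩B(xb₀,ρ)} |v − v(xb₀)|ᵖ dH^t → 0` as `ρ → 0⁺`, for `H^t`-a.e. `xb₀ ∈ Γ`. -/
theorem statement3 (n : ℕ) (t A p β : ℝ) (ht : 0 ≤ t) (hA : 1 ≤ A) (hp : 1 ≤ p) (hβ : 0 < β)
    (Γ : Set (Euc n)) (hΓ : MeasurableSet Γ)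
    (hAhl : ∀ xb ∈ Γ, ∀ ρ : ℝ, 0 < ρ → ENNReal.ofReal ρ ≤ EMetric.diam Γ →
      ENNReal.ofReal (A⁻¹ * ρ ^ t) ≤ μH[t] (Γ ∩ ball xb ρ))
    (v : Euc n → ℝ) (hvm : AEMeasurable v (μH[t].restrict Γ))
    (hvLp : (∫⁻ x in Γ, ENNReal.ofReal (|v x| ^ p) ∂μH[t]) < ⊤)
    (hvW : (∫⁻ x in Γ, ∫⁻ y in Γ,
        ENNReal.ofReal (|v y - v x| ^ p / dist y x ^ (t + β * p)) ∂μH[t] ∂μH[t]) < ⊤)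
    (β' : ℝ) (hβ'0 : 0 < β') (hβ'β : β' < β) :
    ∀ᵐ xb₀ ∂(μH[t].restrict Γ),
      Tendsto (fun ρ : ℝ =>
          ρ ^ (-(p * β')) * ⨍ xb in Γ ∩ ball xb₀ ρ, |v xb - v xb₀| ^ p ∂μH[t])
        (𝓝[>] (0:ℝ)) (𝓝 0) := by
  classical
  have hp0 : (0:ℝ) < p := lt_of_lt_of_le one_pos hp
  have hA0 : (0:ℝ) < A := lt_of_lt_of_le one_pos hA
  set e : ℝ := t + β * p with he_def
  have he : 0 < e := by positivity
  set μ : Measure (Euc n) := μH[t].restrict Γ with hμ_def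
  obtain ⟨g, hg, hgv⟩ := hvm
  set F : Euc n → ℝ≥0∞ := fun x =>
    ∫⁻ y in Γ, ENNReal.ofReal (|g y - g x| ^ p / dist y x ^ e) ∂μH[t] with hF_def
  have hFmeas : Measurable F := aux_meas t p e hp0 he Γ g hg
  -- the outer integral of F is finite
  have hFfin : ∫⁻ x, F x ∂μ ≠ ⊤ := by
    have hcongr : ∀ᵐ x ∂μ, F x
        = ∫⁻ y in Γ, ENNReal.ofReal (|v y - v x| ^ p / dist y x ^ e) ∂μH[t] := by
      filter_upwards [hgv] with x hx
      refine lintegral_congr_ae ?_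
      filter_upwards [hgv] with y hy
      rw [hx, hy]
    rw [lintegral_congr_ae hcongr]
    exact hvW.ne
  have h3 : ∀ᵐ x ∂μ, F x < ⊤ := ae_lt_top hFmeas hFfin
  have h1 : ∀ᵐ x ∂μ, x ∈ Γ := ae_restrict_mem hΓ
  filter_upwards [h1, hgv, h3] with x₀ hx₀Γ hgx₀ hFx₀
  set c : ℝ := p * (β - β') with hc_def
  have hc : 0 < c := mul_pos hp0 (sub_pos.mpr hβ'β)
  set K : ℝ := (F x₀).toReal with hK_def
  have hK0 : 0 ≤ K := ENNReal.toReal_nonneg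
  -- nonnegativity of averages
  have havg_nonneg : ∀ ρ : ℝ, 0 ≤ ⨍ xb in Γ ∩ ball x₀ ρ, |v xb - v x₀| ^ p ∂μH[t] := by
    intro ρ
    rw [setAverage_eq]
    have : 0 ≤ ∫ xb in Γ ∩ ball x₀ ρ, |v xb - v x₀| ^ p ∂μH[t] :=
      integral_nonneg fun xb => Real.rpow_nonneg (abs_nonneg _) p
    exact smul_nonneg (by positivity) this
  have hnonneg : ∀ᶠ ρ in 𝓝[>] (0:ℝ), 0 ≤
      ρ ^ (-(p * β')) * ⨍ xb in Γ ∩ ball x₀ ρ, |v xb - v x₀| ^ p ∂μH[t] := by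
    filter_upwards [self_mem_nhdsWithin] with ρ (hρ : ρ ∈ Ioi (0:ℝ))
    exact mul_nonneg (Real.rpow_nonneg (le_of_lt hρ) _) (havg_nonneg ρ)
  -- the squeeze bound
  have hbound : ∀ᶠ ρ in 𝓝[>] (0:ℝ),
      ρ ^ (-(p * β')) * (⨍ xb in Γ ∩ ball x₀ ρ, |v xb - v x₀| ^ p ∂μH[t])
        ≤ A * K * ρ ^ c := by
    by_cases hsub : Γ.Subsingleton
    · filter_upwards [self_mem_nhdsWithin] with ρ (hρ : ρ ∈ Ioi (0:ℝ))
      have hz : (⨍ xb in Γ ∩ ball x₀ ρ, |v xb - v x₀| ^ p ∂μH[t]) = 0 := by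
        rw [setAverage_eq, setIntegral_eq_zero_of_forall_eq_zero, smul_zero]
        intro xb hxb
        have : xb = x₀ := hsub hxb.1 hx₀Γ
        rw [this, sub_self, abs_zero, Real.zero_rpow hp0.ne']
      rw [hz, mul_zero]
      have hrc : (0:ℝ) < ρ ^ c := Real.rpow_pos_of_pos hρ c
      exact mul_nonneg (mul_nonneg hA0.le hK0) hrc.le
    · have hdiam : EMetric.diam Γ ≠ 0 := by
        rw [Ne]; exact (EMetric.diam_eq_zero_iff).not.mpr hsub
      set δ : ℝ := if EMetric.diam Γ = ⊤ then 1 else (EMetric.diam Γ).toReal with hδ_def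
      have hδpos : 0 < δ := by
        rw [hδ_def]
        split_ifs with h
        · exact one_pos
        · exact ENNReal.toReal_pos hdiam h
      have hδle : ∀ ρ : ℝ, 0 < ρ → ρ ≤ δ → ENNReal.ofReal ρ ≤ EMetric.diam Γ := by
        intro ρ hρ0 hρδ
        rw [hδ_def] at hρδ
        split_ifs at hρδ with h
        · rw [h]; exact le_top
        · calc ENNReal.ofReal ρ ≤ ENNReal.ofReal (EMetric.diam Γ).toReal :=
                ENNReal.ofReal_le_ofReal hρδ
            _ = EMetric.diam Γ := ENNReal.ofReal_toReal h
      have hmem : Ioc (0:ℝ) δ ∈ 𝓝[>] (0:ℝ) := Ioc_mem_nhdsGT_of_mem ⟨le_refl 0, hδpos⟩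
      filter_upwards [hmem] with ρ hρ
      obtain ⟨hρ0, hρδ⟩ := hρ
      have hdiam' := hδle ρ hρ0 hρδ
      set E : Set (Euc n) := Γ ∩ ball x₀ ρ with hE_def
      have hEmeas : MeasurableSet E := hΓ.inter measurableSet_ball
      have hres : μH[t].restrict E ≤ μ := by
        rw [hμ_def]; exact Measure.restrict_mono inter_subset_left le_rfl
      -- lintegral bound
      have L1 : (∫⁻ xb in E, ENNReal.ofReal (|v xb - v x₀| ^ p) ∂μH[t])
          ≤ ENNReal.ofReal (ρ ^ e) * F x₀ := by
        have step1 : (∫⁻ xb in E, ENNReal.ofReal (|v xb - v x₀| ^ p) ∂μH[t])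
            ≤ ∫⁻ xb in E,
              ENNReal.ofReal (ρ ^ e) *
                ENNReal.ofReal (|v xb - v x₀| ^ p / dist xb x₀ ^ e) ∂μH[t] := by
          apply lintegral_mono_ae
          filter_upwards [ae_restrict_mem hEmeas] with xb hxb
          rcases eq_or_ne xb x₀ with rfl | hne
          · simp [Real.zero_rpow hp0.ne']
          · have hd : 0 < dist xb x₀ := dist_pos.mpr hne
            have hdρ : dist xb x₀ < ρ := by
              have := hxb.2; rwa [mem_ball] at this
            have hde : dist xb x₀ ^ e ≤ ρ ^ e := Real.rpow_le_rpow hd.le hdρ.le he.le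
            have hkey : |v xb - v x₀| ^ p ≤ ρ ^ e * (|v xb - v x₀| ^ p / dist xb x₀ ^ e) := by
              rw [mul_div_assoc']
              rw [le_div_iff₀ (Real.rpow_pos_of_pos hd e)]
              rw [mul_comm (ρ ^ e) _]
              exact mul_le_mul_of_nonneg_left hde (Real.rpow_nonneg (abs_nonneg _) p)
            calc ENNReal.ofReal (|v xb - v x₀| ^ p)
                ≤ ENNReal.ofReal (ρ ^ e * (|v xb - v x₀| ^ p / dist xb x₀ ^ e)) :=
                  ENNReal.ofReal_le_ofReal hkey
              _ = ENNReal.ofReal (ρ ^ e) *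
                    ENNReal.ofReal (|v xb - v x₀| ^ p / dist xb x₀ ^ e) :=
                  ENNReal.ofReal_mul (Real.rpow_nonneg hρ0.le e)
        have step2 : (∫⁻ xb in E,
            ENNReal.ofReal (ρ ^ e) *
              ENNReal.ofReal (|v xb - v x₀| ^ p / dist xb x₀ ^ e) ∂μH[t])
            = ENNReal.ofReal (ρ ^ e) *
              ∫⁻ xb in E, ENNReal.ofReal (|v xb - v x₀| ^ p / dist xb x₀ ^ e) ∂μH[t] :=
          lintegral_const_mul' _ _ ENNReal.ofReal_ne_top
        have hgvE : ∀ᵐ xb ∂(μH[t].restrict E), v xb = g xb :=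
          hgv.filter_mono (ae_mono hres)
        have step3 : (∫⁻ xb in E, ENNReal.ofReal (|v xb - v x₀| ^ p / dist xb x₀ ^ e) ∂μH[t])
            = ∫⁻ xb in E, ENNReal.ofReal (|g xb - g x₀| ^ p / dist xb x₀ ^ e) ∂μH[t] := by
          refine lintegral_congr_ae ?_
          filter_upwards [hgvE] with xb hxb
          rw [hxb, hgx₀]
        have step4 : (∫⁻ xb in E, ENNReal.ofReal (|g xb - g x₀| ^ p / dist xb x₀ ^ e) ∂μH[t])
            ≤ F x₀ :=
          lintegral_mono' (Measure.restrict_mono inter_subset_left le_rfl) le_rfl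
        calc (∫⁻ xb in E, ENNReal.ofReal (|v xb - v x₀| ^ p) ∂μH[t])
            ≤ ∫⁻ xb in E, ENNReal.ofReal (ρ ^ e) *
                ENNReal.ofReal (|v xb - v x₀| ^ p / dist xb x₀ ^ e) ∂μH[t] := step1
          _ = ENNReal.ofReal (ρ ^ e) *
                ∫⁻ xb in E, ENNReal.ofReal (|v xb - v x₀| ^ p / dist xb x₀ ^ e) ∂μH[t] := step2
          _ = ENNReal.ofReal (ρ ^ e) *
                ∫⁻ xb in E, ENNReal.ofReal (|g xb - g x₀| ^ p / dist xb x₀ ^ e) ∂μH[t] := by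
              rw [step3]
          _ ≤ ENNReal.ofReal (ρ ^ e) * F x₀ := mul_le_mul_right step4 _
      -- Bochner integral bound
      have hgvE : ∀ᵐ xb ∂(μH[t].restrict E), v xb = g xb :=
        hgv.filter_mono (ae_mono hres)
      have hvE : AEMeasurable v (μH[t].restrict E) := ⟨g, hg, hgvE⟩
      have hfm : AEMeasurable (fun xb => |v xb - v x₀| ^ p) (μH[t].restrict E) :=
        (Real.continuous_rpow_const hp0.le).measurable.comp_aemeasurable
          ((continuous_abs.measurable.comp_aemeasurable (hvE.sub aemeasurable_const)))
      have hint_nonneg : 0 ≤ ∫ xb in E, |v xb - v x₀| ^ p ∂μH[t] :=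
        integral_nonneg fun xb => Real.rpow_nonneg (abs_nonneg _) p
      have hInt : (∫ xb in E, |v xb - v x₀| ^ p ∂μH[t]) ≤ ρ ^ e * K := by
        rw [integral_eq_lintegral_of_nonneg_ae
          (Eventually.of_forall fun xb => Real.rpow_nonneg (abs_nonneg _) p)
          hfm.aestronglyMeasurable]
        calc (∫⁻ xb in E, ENNReal.ofReal (|v xb - v x₀| ^ p) ∂μH[t]).toReal
            ≤ (ENNReal.ofReal (ρ ^ e) * F x₀).toReal :=
              ENNReal.toReal_mono (ENNReal.mul_ne_top ENNReal.ofReal_ne_top hFx₀.ne) L1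
          _ = ρ ^ e * K := by
              rw [ENNReal.toReal_mul, ENNReal.toReal_ofReal (Real.rpow_nonneg hρ0.le e)]
      -- measure lower bound
      have hm : (μH[t] E).toReal⁻¹ ≤ A * ρ ^ (-t) := by
        rcases eq_or_ne (μH[t] E) ⊤ with hEtop | hEfin
        · rw [hEtop]
          simp only [ENNReal.toReal_top, inv_zero]
          positivity
        · have hge : A⁻¹ * ρ ^ t ≤ (μH[t] E).toReal := by
            have h := hAhl x₀ hx₀Γ ρ hρ0 hdiam'
            calc A⁻¹ * ρ ^ t = (ENNReal.ofReal (A⁻¹ * ρ ^ t)).toReal :=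
                  (ENNReal.toReal_ofReal (by positivity)).symm
              _ ≤ (μH[t] E).toReal := ENNReal.toReal_mono hEfin h
          have hpos : 0 < A⁻¹ * ρ ^ t := by positivity
          calc (μH[t] E).toReal⁻¹ ≤ (A⁻¹ * ρ ^ t)⁻¹ := inv_anti₀ hpos hge
            _ = A * ρ ^ (-t) := by rw [mul_inv, inv_inv, ← Real.rpow_neg hρ0.le]
      -- combine
      rw [setAverage_eq, smul_eq_mul]
      have h1' : (μH[t] E).toReal⁻¹ * (∫ xb in E, |v xb - v x₀| ^ p ∂μH[t])
          ≤ (A * ρ ^ (-t)) * (ρ ^ e * K) :=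
        mul_le_mul hm hInt hint_nonneg (by positivity)
      calc ρ ^ (-(p * β')) *
            ((μH[t] E).toReal⁻¹ * ∫ xb in E, |v xb - v x₀| ^ p ∂μH[t])
          ≤ ρ ^ (-(p * β')) * ((A * ρ ^ (-t)) * (ρ ^ e * K)) :=
            mul_le_mul_of_nonneg_left h1' (Real.rpow_nonneg hρ0.le _)
        _ = A * K * (ρ ^ (-(p * β')) * ρ ^ (-t) * ρ ^ e) := by ring
        _ = A * K * ρ ^ c := by
            rw [← Real.rpow_add hρ0, ← Real.rpow_add hρ0]
            congr 1
            rw [he_def, hc_def]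
            ring
  refine squeeze_zero' hnonneg hbound ?_
  have h0 : Tendsto (fun ρ : ℝ => ρ ^ c) (𝓝[>] (0:ℝ)) (𝓝 0) := aux_rpow_tendsto hc
  have := h0.const_mul (A * K)
  simpa using this
end
end

section
/- If u ∈ N^{s,p}(Ω), then u ∈ Lᵖ(Ω′) for every open set Ω′ whose closure is compact and contained in Ω; that is, N^{s,p}(Ω) ⊆ Lᵖ_loc(Ω). -/
open MeasureTheory Metric Set Filter
open scoped ENNReal NNReal Topology

noncomputable section

variable {n : ℕ}

/-- `𝒩^{s,p}(Ω) ⊆ Lᵖ_loc(Ω)`: every `u ∈ 𝒩^{s,p}(Ω)` is `p`-integrable on each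
open set compactly contained in `Ω`. -/
theorem statement4 (n : ℕ) (hn : 1 ≤ n) (p : ℝ) (hp : 1 ≤ p)
    (Ω : Set (Euc n)) (hΩo : IsOpen Ω) (hΩne : Ω.Nonempty) (hfr : (frontier Ω).Nonempty)
    (s : Euc n → ℝ) (hsm : Measurable s) (hs0 : ∀ x, 0 ≤ s x) (hsb : ∃ b : ℝ, ∀ x, s x ≤ b)
    (u : Euc n → ℝ) (hu : MemN Ω s p u) :
    ∀ Ω' : Set (Euc n), IsOpen Ω' → IsCompact (closure Ω') → closure Ω' ⊆ Ω →
      IntegrableOn (fun x => |u x| ^ p) Ω' volume := by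
  intro Ω' hΩ'o hΩ'c hsub
  rcases Ω'.eq_empty_or_nonempty with rfl | hne
  · simp [IntegrableOn]
  obtain ⟨b, hb⟩ := hsb
  have hb0 : (0:ℝ) ≤ b := (hs0 0).trans (hb 0)
  have hp0 : (0:ℝ) < p := lt_of_lt_of_le one_pos hp
  have hΩ'Ω : Ω' ⊆ Ω := subset_closure.trans hsub
  have hKne : (closure Ω').Nonempty := hne.closure
  have hΩcne : Ωᶜ.Nonempty := by
    obtain ⟨y, hy⟩ := hfr
    exact ⟨y, (hΩo.frontier_eq ▸ hy).2⟩
  have hΩnu : Ω ≠ univ := by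
    obtain ⟨y, hy⟩ := hΩcne
    exact fun h => hy (h ▸ mem_univ y)
  -- lower bound δ on dB over closure Ω'
  obtain ⟨z, hzK, hz⟩ := hΩ'c.exists_isMinOn hKne ((continuous_infDist_pt Ωᶜ).continuousOn)
  set δ := infDist z Ωᶜ with hδdef
  have hδpos : 0 < δ := by
    rw [hδdef]
    exact (hΩo.isClosed_compl.notMem_iff_infDist_pos hΩcne).1 (by simpa using hsub hzK)
  have hfrc : frontier Ω ⊆ Ωᶜ := fun y hy => (hΩo.frontier_eq ▸ hy).2
  have hδle : ∀ x ∈ closure Ω', δ ≤ dB Ω x := by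
    intro x hx
    exact le_trans (hz hx) (infDist_le_infDist_of_subset hfrc hfr)
  -- upper bound D on dB over closure Ω'
  obtain ⟨w, hwK, hw⟩ :=
    hΩ'c.exists_isMaxOn hKne ((continuous_infDist_pt (frontier Ω)).continuousOn)
  set D := infDist w (frontier Ω) with hDdef
  have hDle : ∀ x ∈ closure Ω', dB Ω x ≤ D := fun x hx => hw hx
  -- constants
  set Cd : ℝ := (max 1 D) ^ (p * b) with hCddef
  have hCd0 : 0 ≤ Cd := Real.rpow_nonneg (le_trans zero_le_one (le_max_left 1 D)) _
  set m0 : ℝ := (volume (ball (0 : Euc n) (δ / 2))).toReal with hm0def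
  have hm0pos : 0 < m0 := by
    rw [hm0def]
    exact ENNReal.toReal_pos (measure_ball_pos volume _ (by linarith)).ne' measure_ball_lt_top.ne
  set M : ℝ := m0⁻¹ * ∫ y in Ω, |u y| with hMdef
  have hM0 : 0 ≤ M := by
    rw [hMdef]
    exact mul_nonneg (inv_nonneg.2 hm0pos.le) (integral_nonneg fun y => abs_nonneg _)
  -- pointwise bound
  have hnuNN : ∀ x, 0 ≤ nuInt Ω s p u x := by
    intro x
    have havg : 0 ≤ ⨍ y in PsiB Ω x, |u y - u x| := by
      rw [setAverage_eq]
      exact smul_nonneg (inv_nonneg.2 ENNReal.toReal_nonneg)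
        (integral_nonneg fun y => abs_nonneg _)
    exact mul_nonneg (Real.rpow_nonneg havg _) (Real.rpow_nonneg infDist_nonneg _)
  set g : Euc n → ℝ := fun x => 2 ^ p * (Cd * nuInt Ω s p u x + M ^ p) with hgdef
  have key : ∀ x ∈ Ω', |u x| ^ p ≤ g x := by
    intro x hx
    have hxK : x ∈ closure Ω' := subset_closure hx
    have hxΩ : x ∈ Ω := hΩ'Ω hx
    set d := dB Ω x with hddef
    have hdδ : δ ≤ d := hδle x hxK
    have hdpos : 0 < d := lt_of_lt_of_le hδpos hdδ
    have hdD : d ≤ D := hDle x hxK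
    set B : Set (Euc n) := ball x (d / 2) with hBdef
    have hBsub : B ⊆ Ω := by
      have h1 : d ≤ infDist x Ωᶜ := by
        obtain ⟨y, hy, hxy⟩ := exists_mem_frontier_infDist_compl_eq_dist hxΩ hΩnu
        rw [hxy]
        exact infDist_le_dist_of_mem hy
      exact (ball_subset_ball (by linarith)).trans ball_infDist_compl_subset
    have hvB0 : (0:ℝ≥0∞) < volume B := measure_ball_pos volume _ (by linarith)
    have hvBt : volume B < ⊤ := measure_ball_lt_top
    set vb : ℝ := (volume B).toReal with hvbdef
    have hvbpos : 0 < vb := ENNReal.toReal_pos hvB0.ne' hvBt.ne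
    have huB : IntegrableOn u B volume := hu.1.mono_set hBsub
    have hint1 : IntegrableOn (fun y => |u y - u x|) B volume :=
      (huB.sub (integrableOn_const hvBt.ne)).abs
    have hint2 : IntegrableOn (fun y => |u y|) B volume := huB.abs
    set A : ℝ := ⨍ y in B, |u y - u x| with hAdef
    have hAeq : A = vb⁻¹ * ∫ y in B, |u y - u x| := by
      rw [hAdef, setAverage_eq, smul_eq_mul, hvbdef]
      rfl
    have hA0 : 0 ≤ A := by
      rw [hAeq]
      exact mul_nonneg (inv_nonneg.2 hvbpos.le) (integral_nonneg fun y => abs_nonneg _)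
    -- step 1 : |u x| ≤ A + vb⁻¹ * ∫_B |u|
    have step1 : |u x| ≤ A + vb⁻¹ * ∫ y in B, |u y| := by
      have hmono : ∫ _ in B, |u x| ≤ ∫ y in B, (|u y - u x| + |u y|) := by
        refine setIntegral_mono (integrableOn_const hvBt.ne) (hint1.add hint2) ?_
        intro y
        calc |u x| = |(u x - u y) + u y| := by ring_nf
        _ ≤ |u x - u y| + |u y| := abs_add_le _ _
        _ = |u y - u x| + |u y| := by rw [abs_sub_comm]
      rw [setIntegral_const, smul_eq_mul,
        integral_add hint1 hint2] at hmono
      rw [hAeq, ← mul_add, inv_mul_eq_div, le_div_iff₀ hvbpos, mul_comm]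
      exact hmono
    -- step 2 : vb⁻¹ * ∫_B |u| ≤ M
    have step2 : vb⁻¹ * ∫ y in B, |u y| ≤ M := by
      have hsubint : ∫ y in B, |u y| ≤ ∫ y in Ω, |u y| :=
        setIntegral_mono_set hu.1.abs
          (Filter.Eventually.of_forall fun y => abs_nonneg _)
          (HasSubset.Subset.eventuallyLE hBsub)
      have hvb_ge : m0 ≤ vb := by
        rw [hm0def, hvbdef, hBdef]
        have h1 : volume (ball x (δ / 2)) ≤ volume (ball x (d / 2)) :=
          measure_mono (ball_subset_ball (by linarith))
        have h2 : volume (ball (0 : Euc n) (δ / 2)) = volume (ball x (δ / 2)) :=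
          (Measure.addHaar_ball_center volume x (δ / 2)).symm
        exact ENNReal.toReal_mono measure_ball_lt_top.ne (h2 ▸ h1)
      have hinv : vb⁻¹ ≤ m0⁻¹ := inv_anti₀ hm0pos hvb_ge
      rw [hMdef]
      exact mul_le_mul hinv hsubint (integral_nonneg fun y => abs_nonneg _)
        (inv_nonneg.2 hm0pos.le)
    have hAM : |u x| ≤ A + M := step1.trans (by linarith)
    -- step 3 : |u x|^p ≤ 2^p * (A^p + M^p)
    have step3 : |u x| ^ p ≤ 2 ^ p * (A ^ p + M ^ p) := by
      have h1 : |u x| ^ p ≤ (A + M) ^ p :=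
        Real.rpow_le_rpow (abs_nonneg _) hAM hp0.le
      refine h1.trans ?_
      rcases le_total A M with hc | hc
      · have h2 : (A + M) ^ p ≤ (2 * M) ^ p :=
          Real.rpow_le_rpow (by linarith) (by linarith) hp0.le
        rw [Real.mul_rpow (by norm_num) hM0] at h2
        have : (0:ℝ) ≤ A ^ p := Real.rpow_nonneg hA0 _
        nlinarith [Real.rpow_nonneg (show (0:ℝ) ≤ 2 by norm_num) p]
      · have h2 : (A + M) ^ p ≤ (2 * A) ^ p :=
          Real.rpow_le_rpow (by linarith) (by linarith) hp0.le
        rw [Real.mul_rpow (by norm_num) hA0] at h2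
        have : (0:ℝ) ≤ M ^ p := Real.rpow_nonneg hM0 _
        nlinarith [Real.rpow_nonneg (show (0:ℝ) ≤ 2 by norm_num) p]
    -- step 4 : A^p ≤ Cd * nuInt x
    have step4 : A ^ p ≤ Cd * nuInt Ω s p u x := by
      have hAnu : A ^ p = nuInt Ω s p u x * d ^ (p * s x) := by
        have hcancel : d ^ (-(p * s x)) * d ^ (p * s x) = 1 := by
          rw [← Real.rpow_add hdpos]; simp
        rw [nuInt]
        rw [mul_assoc, hcancel, mul_one]
        rfl
      have hdCd : d ^ (p * s x) ≤ Cd := by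
        rw [hCddef]
        have h1 : d ^ (p * s x) ≤ (max 1 D) ^ (p * s x) :=
          Real.rpow_le_rpow hdpos.le (hdD.trans (le_max_right 1 D))
            (mul_nonneg hp0.le (hs0 x))
        refine h1.trans (Real.rpow_le_rpow_of_exponent_le (le_max_left 1 D) ?_)
        exact mul_le_mul_of_nonneg_left (hb x) hp0.le
      calc A ^ p = nuInt Ω s p u x * d ^ (p * s x) := hAnu
      _ ≤ nuInt Ω s p u x * Cd := mul_le_mul_of_nonneg_left hdCd (hnuNN x)
      _ = Cd * nuInt Ω s p u x := mul_comm _ _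
    have h2p : (0:ℝ) ≤ 2 ^ p := Real.rpow_nonneg (by norm_num) _
    calc |u x| ^ p ≤ 2 ^ p * (A ^ p + M ^ p) := step3
    _ ≤ 2 ^ p * (Cd * nuInt Ω s p u x + M ^ p) := by
        apply mul_le_mul_of_nonneg_left _ h2p
        linarith
    _ = g x := rfl
  -- integrability of the bound
  have hvolΩ' : volume Ω' < ⊤ :=
    lt_of_le_of_lt (measure_mono subset_closure) hΩ'c.measure_lt_top
  have hg : IntegrableOn g Ω' volume := by
    have h1 : IntegrableOn (nuInt Ω s p u) Ω' volume := hu.2.mono_set hΩ'Ω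
    have h2 : IntegrableOn (fun x => Cd * nuInt Ω s p u x + M ^ p) Ω' volume :=
      (h1.const_mul Cd).add (integrableOn_const hvolΩ'.ne)
    exact h2.const_mul _
  -- measurability
  have hmeas : AEStronglyMeasurable (fun x => |u x| ^ p) (volume.restrict Ω') := by
    have h1 : AEStronglyMeasurable u (volume.restrict Ω') :=
      hu.1.aestronglyMeasurable.mono_measure (Measure.restrict_mono hΩ'Ω le_rfl)
    exact ((Real.continuous_rpow_const hp0.le).comp continuous_abs).comp_aestronglyMeasurable h1
  refine Integrable.mono' hg hmeas ?_
  refine (ae_restrict_iff' hΩ'o.measurableSet).2 (Filter.Eventually.of_forall ?_)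
  intro x hx
  rw [Real.norm_eq_abs, abs_of_nonneg (Real.rpow_nonneg (abs_nonneg _) _)]
  exact key x hx
end
end

section
/- Assume (H1). Let x̄ ∈ Γ and 0 < δ ≤ δ_Γ, and put R₀ := sup_{x ∈ Q_{λ₀,δ}(x̄)} d(x). Then R₀ ≥ (η₀ λ₀ δ)^{θ_Γ(x̄)}, and there exists a constant c > 0 depending only on n such that, for each 0 < λ < λ₀, the Lebesgue measures satisfy |Q_{λ,δ}(x̄)| ≥ c (1 − λ/λ₀)^{n·θ_Γ(x̄)} R₀ⁿ and |Ω ∩ B(x̄,δ)| ≥ c R₀ⁿ. -/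
open MeasureTheory Metric Set Filter
open scoped ENNReal NNReal Topology

noncomputable section

variable {n : ℕ}

/-- In a normed space, a point within distance `dB Ω x` of `x ∈ Ω` (open) is in `Ω`. -/
lemma mem_of_dist_lt_dB {n : ℕ} {Ω : Set (Euc n)} (hΩ : IsOpen Ω) {x z : Euc n}
    (hx : x ∈ Ω) (h : dist x z < dB Ω x) : z ∈ Ω := by
  by_contra hz
  by_cases hfr : (segment ℝ x z ∩ frontier Ω).Nonempty
  · obtain ⟨w, hw, hwf⟩ := hfr
    have h1 : dB Ω x ≤ dist x w := Metric.infDist_le_dist_of_mem hwf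
    have h2 : w ∈ closedBall x (dist x z) :=
      (convex_closedBall x (dist x z)).segment_subset (mem_closedBall_self dist_nonneg)
        (by simp [mem_closedBall, dist_comm]) hw
    rw [mem_closedBall, dist_comm] at h2
    linarith
  · have hzc : z ∉ closure Ω := fun hc =>
      hfr ⟨z, right_mem_segment ℝ x z, hc, by rwa [hΩ.interior_eq]⟩
    have hsub : segment ℝ x z ⊆ Ω ∪ (closure Ω)ᶜ := by
      intro w hw
      by_cases hwΩ : w ∈ Ω
      · exact Or.inl hwΩ
      · refine Or.inr fun hwc => hfr ⟨w, hw, hwc, by rwa [hΩ.interior_eq]⟩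
    obtain ⟨w, -, hwΩ, hwc⟩ := (convex_segment x z).isPreconnected Ω (closure Ω)ᶜ hΩ
      isClosed_closure.isOpen_compl hsub ⟨x, left_mem_segment ℝ x z, hx⟩
      ⟨z, right_mem_segment ℝ x z, hzc⟩
    exact hwc (subset_closure hwΩ)

/-- Given `0 < ρ ≤ dist xb x`, there is a point `x'` such that the ball `B(x', ρ/2)` lies
within distance `ρ` of `x` and strictly inside `B(xb, dist xb x)`. -/
lemma aux_ball {n : ℕ} (xb x : Euc n) (ρ : ℝ) (hρ : 0 < ρ) (hle : ρ ≤ dist xb x) :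
    ∃ x' : Euc n, ∀ z ∈ ball x' (ρ / 2), dist x z < ρ ∧ dist xb z < dist xb x := by
  have hd : 0 < dist xb x := lt_of_lt_of_le hρ hle
  set d := dist xb x with hdd
  set c := ρ / (2 * d) with hc
  have hc0 : 0 ≤ c := by positivity
  have hnorm : ‖xb - x‖ = d := by rw [← dist_eq_norm, hdd, dist_comm]
  refine ⟨x + c • (xb - x), fun z hz => ?_⟩
  have hxx' : dist x (x + c • (xb - x)) = ρ / 2 := by
    rw [dist_self_add_right, norm_smul, Real.norm_eq_abs, abs_of_nonneg hc0, hnorm, hc]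
    field_simp
  have hxbx' : dist xb (x + c • (xb - x)) = d - ρ / 2 := by
    have hvec : xb - (x + c • (xb - x)) = (1 - c) • (xb - x) := by
      rw [sub_smul, one_smul]; abel
    have hc1 : c ≤ 1 := by
      rw [hc, div_le_one (by positivity)]; linarith
    rw [dist_eq_norm, hvec, norm_smul, Real.norm_eq_abs, abs_of_nonneg (by linarith), hnorm, hc]
    field_simp
  have hz' : dist z (x + c • (xb - x)) < ρ / 2 := mem_ball.1 hz
  constructor
  · have := dist_triangle x (x + c • (xb - x)) z
    rw [hxx'] at this
    rw [dist_comm] at hz'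
    linarith
  · have := dist_triangle xb (x + c • (xb - x)) z
    rw [hxbx'] at this
    rw [dist_comm] at hz'
    linarith

set_option maxHeartbeats 1000000 in
/-- Under the corkscrew hypothesis (H1), with
`R₀ := sup_{x ∈ Q_{λ₀,δ}(xb)} d(x)`, one has `R₀ ≥ (η₀λ₀δ)^{θ_Γ(xb)}` and lower volume bounds
`|Q_{λ,δ}(xb)| ≥ c (1 − λ/λ₀)^{nθ_Γ(xb)} R₀ⁿ` and `|Ω ∩ B(xb,δ)| ≥ c R₀ⁿ`, with `c = c(n) > 0`. -/
theorem statement5 (n : ℕ) (hn : 1 ≤ n) :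
    ∃ c : ℝ, 0 < c ∧
      ∀ (Ω : Set (Euc n)), IsOpen Ω → Ω.Nonempty → (frontier Ω).Nonempty →
      ∀ (Γ : Set (Euc n)), Γ ⊆ frontier Ω →
      ∀ (δΓ : ℝ), 0 < δΓ → δΓ < 1 →
      ∀ (θΓ : Euc n → ℝ), (∀ xb, 1 ≤ θΓ xb) → (∃ b : ℝ, ∀ xb, θΓ xb ≤ b) →
      ∀ (lam₀ η₀ : ℝ), 0 < lam₀ → lam₀ < 1 → 0 < η₀ → η₀ < 1 →
      (∀ xb ∈ Γ, IsCorkscrew Ω (Qreg Ω lam₀ (θΓ xb) xb) xb η₀ (θΓ xb) δΓ) →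
      ∀ xb ∈ Γ, ∀ δ : ℝ, 0 < δ → δ ≤ δΓ →
        (η₀ * lam₀ * δ) ^ θΓ xb ≤ sSup (dB Ω '' (Qreg Ω lam₀ (θΓ xb) xb ∩ ball xb δ)) ∧
        ∀ lam : ℝ, 0 < lam → lam < lam₀ →
          ENNReal.ofReal (c * (1 - lam / lam₀) ^ ((n : ℝ) * θΓ xb) *
              sSup (dB Ω '' (Qreg Ω lam₀ (θΓ xb) xb ∩ ball xb δ)) ^ n)
            ≤ volume (Qreg Ω lam (θΓ xb) xb ∩ ball xb δ) ∧
          ENNReal.ofReal (c * sSup (dB Ω '' (Qreg Ω lam₀ (θΓ xb) xb ∩ ball xb δ)) ^ n)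
            ≤ volume (Ω ∩ ball xb δ) := by
  classical
  set V := (volume (ball (0 : Euc n) 1)).toReal with hVdef
  have hVtop : volume (ball (0 : Euc n) 1) ≠ ⊤ := measure_ball_lt_top.ne
  have hVpos : 0 < V :=
    ENNReal.toReal_pos (measure_ball_pos volume 0 one_pos).ne' hVtop
  refine ⟨V / 8 ^ n, by positivity, ?_⟩
  intro Ω hΩ hΩne hfne Γ hΓ δΓ hδΓ0 hδΓ1 θΓ hθ1 hθb lam₀ η₀ hlam₀ hlam₀1 hη₀ hη₀1 hcs
    xb hxb δ hδ0 hδδΓ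
  set θ := θΓ xb with hθdef
  have hθ : 1 ≤ θ := hθ1 xb
  have hθ0 : 0 ≤ θ := le_trans zero_le_one hθ
  have hxbF : xb ∈ frontier Ω := hΓ hxb
  set S := dB Ω '' (Qreg Ω lam₀ θ xb ∩ ball xb δ) with hSdef
  obtain ⟨x₀, hx₀Q, hx₀1, hx₀2, hx₀3⟩ := hcs xb hxb δ hδ0 hδδΓ
  have hx₀S : dB Ω x₀ ∈ S :=
    ⟨x₀, ⟨hx₀Q, mem_ball.2 (by rw [dist_comm]; exact hx₀2)⟩, rfl⟩
  have hSne : S.Nonempty := ⟨_, hx₀S⟩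
  have hSbdd : BddAbove S := by
    refine ⟨δ, ?_⟩
    rintro _ ⟨y, ⟨-, hyb⟩, rfl⟩
    calc dB Ω y ≤ Metric.infDist xb (frontier Ω) + dist y xb :=
          Metric.infDist_le_infDist_add_dist
      _ = dist y xb := by rw [Metric.infDist_zero_of_mem hxbF, zero_add]
      _ ≤ δ := (mem_ball.1 hyb).le
  have hR₀1 : (η₀ * lam₀ * δ) ^ θ ≤ sSup S := by
    have h0 : (η₀ * lam₀ * δ) ^ θ ≤ (η₀ * δ) ^ θ := by
      apply Real.rpow_le_rpow (by positivity) ?_ hθ0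
      nlinarith [mul_pos hη₀ hδ0]
    exact le_trans (le_trans h0 hx₀3.le) (le_csSup hSbdd hx₀S)
  refine ⟨hR₀1, ?_⟩
  set R₀ := sSup S with hR₀def
  have hR₀pos : 0 < R₀ :=
    lt_of_lt_of_le (Real.rpow_pos_of_pos (by positivity) θ) hR₀1
  intro lam hlam hlamlt
  obtain ⟨a, haS, hha⟩ := exists_lt_of_lt_csSup hSne (half_lt_self hR₀pos)
  obtain ⟨x, ⟨hxQ, hxball⟩, rfl⟩ := haS
  obtain ⟨hxΩ, hxlt⟩ := hxQ
  set t := dB Ω x with htdef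
  have htpos : 0 < t := lt_trans (by positivity) hha
  have htd : t ≤ dist xb x := by
    rw [dist_comm]; exact Metric.infDist_le_dist_of_mem hxbF
  have hxδ : dist xb x < δ := by rw [dist_comm]; exact mem_ball.1 hxball
  set u := lam / lam₀ with hudef
  have hu0 : 0 < u := div_pos hlam hlam₀
  have hu1 : u < 1 := (div_lt_one hlam₀).2 hlamlt
  have h1u : 0 < 1 - u := by linarith
  have hvol : ∀ (y : Euc n) (r : ℝ), 0 < r →
      volume (ball y r) = ENNReal.ofReal (r ^ n * V) := by
    intro y r hr
    rw [hVdef, Measure.addHaar_ball_of_pos volume y hr, finrank_euclideanSpace_fin,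
      ENNReal.ofReal_mul (pow_nonneg hr.le n), ENNReal.ofReal_toReal hVtop]
  have h8 : (8 : ℝ) ^ n = 2 ^ n * 4 ^ n := by rw [← mul_pow]; norm_num
  have hB : R₀ ^ n ≤ (2 * t) ^ n := pow_le_pow_left₀ hR₀pos.le (by linarith) n
  constructor
  · -- first volume bound
    set ρ := (1 - u) * t / 2 with hρdef
    have hρpos : 0 < ρ := by positivity
    have hρt : ρ ≤ t := by nlinarith [mul_pos hu0 htpos]
    obtain ⟨x', hx'⟩ := aux_ball xb x ρ hρpos (hρt.trans htd)
    have hsub : ball x' (ρ / 2) ⊆ Qreg Ω lam θ xb ∩ ball xb δ := by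
      intro z hz
      obtain ⟨hz1, hz2⟩ := hx' z hz
      have hzΩ : z ∈ Ω := mem_of_dist_lt_dB hΩ hxΩ (lt_of_lt_of_le hz1 hρt)
      have hlip : t ≤ dB Ω z + dist x z := Metric.infDist_le_infDist_add_dist
      have hdBz : t - ρ < dB Ω z := by linarith
      refine ⟨⟨hzΩ, ?_⟩, mem_ball.2 (by rw [dist_comm]; linarith)⟩
      have e1 : (lam * dist xb z) ^ θ ≤ (u * (lam₀ * dist xb x)) ^ θ := by
        apply Real.rpow_le_rpow (by positivity) ?_ hθ0
        have huu : u * (lam₀ * dist xb x) = lam * dist xb x := by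
          rw [hudef]; field_simp
        rw [huu]
        exact mul_le_mul_of_nonneg_left hz2.le hlam.le
      have e2 : (u * (lam₀ * dist xb x)) ^ θ = u ^ θ * (lam₀ * dist xb x) ^ θ :=
        Real.mul_rpow hu0.le (by positivity)
      have e3 : u ^ θ ≤ u := by
        calc u ^ θ ≤ u ^ (1 : ℝ) := Real.rpow_le_rpow_of_exponent_ge hu0 hu1.le hθ
          _ = u := Real.rpow_one u
      have e4 : u ^ θ * (lam₀ * dist xb x) ^ θ ≤ u * t :=
        mul_le_mul e3 hxlt.le (Real.rpow_nonneg (by positivity) θ) hu0.le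
      have e5 : u * t < t - ρ := by nlinarith [mul_pos (sub_pos.2 hu1) htpos]
      calc (lam * dist xb z) ^ θ ≤ u * t := by rw [e2] at e1; exact e1.trans e4
        _ < t - ρ := e5
        _ < dB Ω z := hdBz
    have hρ2 : ρ / 2 = (1 - u) * t / 4 := by rw [hρdef]; ring
    calc ENNReal.ofReal (V / 8 ^ n * (1 - u) ^ ((n : ℝ) * θ) * R₀ ^ n)
        ≤ ENNReal.ofReal ((ρ / 2) ^ n * V) := by
          apply ENNReal.ofReal_le_ofReal
          have hA : (1 - u) ^ ((n : ℝ) * θ) ≤ (1 - u) ^ n := by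
            have h := Real.rpow_le_rpow_of_exponent_ge h1u (by linarith)
              (le_mul_of_one_le_right (Nat.cast_nonneg n) hθ)
            rwa [Real.rpow_natCast] at h
          calc V / 8 ^ n * (1 - u) ^ ((n : ℝ) * θ) * R₀ ^ n
              ≤ V / 8 ^ n * (1 - u) ^ n * (2 * t) ^ n := by
                apply mul_le_mul (mul_le_mul_of_nonneg_left hA (by positivity)) hB
                  (by positivity)
                exact mul_nonneg (by positivity) (pow_nonneg h1u.le n)
            _ = (ρ / 2) ^ n * V := by rw [hρ2, h8, div_pow, mul_pow, mul_pow]; field_simp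
        _ = volume (ball x' (ρ / 2)) := (hvol x' (ρ / 2) (by positivity)).symm
        _ ≤ volume (Qreg Ω lam θ xb ∩ ball xb δ) := measure_mono hsub
  · -- second volume bound
    obtain ⟨x'', hx''⟩ := aux_ball xb x t htpos htd
    have hsub : ball x'' (t / 2) ⊆ Ω ∩ ball xb δ := by
      intro z hz
      obtain ⟨hz1, hz2⟩ := hx'' z hz
      exact ⟨mem_of_dist_lt_dB hΩ hxΩ hz1, mem_ball.2 (by rw [dist_comm]; linarith)⟩
    calc ENNReal.ofReal (V / 8 ^ n * R₀ ^ n)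
        ≤ ENNReal.ofReal ((t / 2) ^ n * V) := by
          apply ENNReal.ofReal_le_ofReal
          have h24 : (2 : ℝ) ^ n ≤ 4 ^ n := pow_le_pow_left₀ (by norm_num) (by norm_num) n
          calc V / 8 ^ n * R₀ ^ n ≤ V / 8 ^ n * (2 * t) ^ n :=
                mul_le_mul_of_nonneg_left hB (by positivity)
            _ ≤ (t / 2) ^ n * V := by
                have expand : V / 8 ^ n * (2 * t) ^ n = V * t ^ n / 4 ^ n := by
                  rw [mul_pow, h8]; field_simp
                have expand2 : (t / 2) ^ n * V = t ^ n * V / 2 ^ n := by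
                  rw [div_pow]; ring
                rw [expand, expand2, div_le_div_iff₀ (by positivity) (by positivity)]
                have hkey : 0 ≤ (4 ^ n - 2 ^ n) * (V * t ^ n) :=
                  mul_nonneg (by linarith) (by positivity)
                nlinarith [hkey]
        _ = volume (ball x'' (t / 2)) := (hvol x'' (t / 2) (by positivity)).symm
        _ ≤ volume (Ω ∩ ball xb δ) := measure_mono hsub
end
end

section
/- Assume upper Ahlfors regularity (H4′). Then there is a constant c, depending only on n, t and A_Γ (and in particular independent of δ), such that for every 0 < δ ≤ δ_Γ and every H^t-measurable set Γ″ ⊆ Γ one has ∫_{Γ″} G_δ(x̄) dH^t(x̄) ≤ c · δ^t · ν(B_{2δ}(Γ″); u), where B_r(E) := { x ∈ ℝⁿ : dist(x, E) < r }. -/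
open MeasureTheory Metric Set Filter
open scoped ENNReal NNReal Topology

noncomputable section

variable {n : ℕ}

/-- integral bound on `G_δ` over upper Ahlfors-regular sets. Under (H4′),
`∫_{Γ″} G_δ dH^t ≤ c δ^t ν(B_{2δ}(Γ″);u)` with `c = c(n,t,A_Γ)` independent of `δ`. -/
theorem statement13 (n : ℕ) (hn : 1 ≤ n) (t AΓ : ℝ)
    (ht : 0 ≤ t) (htn : t < n) (hAΓ : 1 ≤ AΓ) :
    ∃ c : ℝ, 0 < c ∧
      ∀ (p : ℝ), 1 ≤ p →
      ∀ (Ω : Set (Euc n)), IsOpen Ω → Ω.Nonempty → (frontier Ω).Nonempty →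
      ∀ (Γ : Set (Euc n)), Γ ⊆ frontier Ω →
      ∀ (δΓ : ℝ), 0 < δΓ → δΓ < 1 →
      (∀ xb ∈ Γ, ∀ ρ : ℝ, 0 < ρ → μH[t] (Γ ∩ ball xb ρ) ≤ ENNReal.ofReal (AΓ * ρ ^ t)) →
      ∀ (s : Euc n → ℝ), Measurable s → (∀ x, 0 ≤ s x) → (∃ b : ℝ, ∀ x, s x ≤ b) →
      ∀ (u : Euc n → ℝ), MemN Ω s p u →
      ∀ (δ : ℝ), 0 < δ → δ ≤ δΓ →
      ∀ (Γ'' : Set (Euc n)), MeasurableSet Γ'' → Γ'' ⊆ Γ →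
        (∫⁻ xb in Γ'', ENNReal.ofReal (nuM Ω s p u (ball xb δ)) ∂μH[t]) ≤
          ENNReal.ofReal (c * δ ^ t * nuM Ω s p u (thickening (2 * δ) Γ'')) := by
  refine ⟨AΓ * 2 ^ t, by positivity, ?_⟩
  intro p hp Ω hΩo hΩne hfr Γ hΓfr δΓ hδΓ0 hδΓ1 hAhl s hsm hs0 hsb u hu δ hδ0 hδδΓ Γ'' hΓ''m hΓ''Γ
  rcases Set.eq_empty_or_nonempty Γ'' with rfl | ⟨x0, hx0⟩
  · simp only [Measure.restrict_empty, lintegral_zero_measure]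
    exact zero_le
  have hnn : ∀ x, 0 ≤ nuInt Ω s p u x := by
    intro x
    unfold nuInt dB
    refine mul_nonneg (Real.rpow_nonneg ?_ _) (Real.rpow_nonneg Metric.infDist_nonneg _)
    unfold MeasureTheory.average
    exact integral_nonneg fun y => abs_nonneg _
  have hx0Γ : x0 ∈ Γ := hΓ''Γ hx0
  haveI hSF : SigmaFinite (μH[t].restrict Γ'') := by
    refine ⟨⟨⟨fun k => ball x0 (k + 1), fun _ => trivial, fun k => ?_, ?_⟩⟩⟩
    · rw [Measure.restrict_apply measurableSet_ball]
      have hsub : ball x0 (k + 1) ∩ Γ'' ⊆ Γ ∩ ball x0 (k + 1) :=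
        fun y hy => ⟨hΓ''Γ hy.2, hy.1⟩
      exact lt_of_le_of_lt (le_trans (measure_mono hsub)
        (hAhl x0 hx0Γ (k + 1) (by positivity))) ENNReal.ofReal_lt_top
    · refine Set.iUnion_eq_univ_iff.2 fun x => ⟨⌈dist x x0⌉₊, ?_⟩
      exact mem_ball.2 ((Nat.le_ceil _).trans_lt (lt_add_one _))
  set T : Set (Euc n) := Ω ∩ thickening (2 * δ) Γ'' with hTdef
  have hFint : IntegrableOn (nuInt Ω s p u) T volume := hu.2.mono_set Set.inter_subset_left
  set F : Euc n → ℝ≥0∞ := fun x => ENNReal.ofReal (nuInt Ω s p u x) with hFdef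
  have hFmeas : AEMeasurable F (volume.restrict T) :=
    ENNReal.measurable_ofReal.comp_aemeasurable hFint.aemeasurable
  have hball_sub : ∀ xb ∈ Γ'', ball xb δ ⊆ thickening (2 * δ) Γ'' := fun xb hxb =>
    (ball_subset_thickening hxb δ).trans (thickening_mono (by linarith) _)
  -- Step A: rewrite the inner integral
  have key : ∀ xb ∈ Γ'', ENNReal.ofReal (nuM Ω s p u (ball xb δ)) =
      ∫⁻ x in T, F x * (ball xb δ).indicator 1 x ∂volume := by
    intro xb hxb
    have hint : IntegrableOn (nuInt Ω s p u) (Ω ∩ ball xb δ) volume :=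
      hu.2.mono_set Set.inter_subset_left
    have h1 : ∀ x, F x * (ball xb δ).indicator 1 x = (ball xb δ).indicator F x := by
      intro x; by_cases h : x ∈ ball xb δ <;> simp [h]
    have h2 : ball xb δ ∩ T = Ω ∩ ball xb δ :=
      Set.ext fun x => ⟨fun h => ⟨h.2.1, h.1⟩, fun h => ⟨h.2, h.1, hball_sub xb hxb h.2⟩⟩
    rw [nuM, ofReal_integral_eq_lintegral_ofReal hint (Filter.Eventually.of_forall hnn)]
    simp_rw [h1]
    rw [lintegral_indicator measurableSet_ball, Measure.restrict_restrict measurableSet_ball, h2]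
  have hae : ∀ᵐ xb ∂(μH[t].restrict Γ''),
      ENNReal.ofReal (nuM Ω s p u (ball xb δ)) =
        ∫⁻ x in T, F x * (ball xb δ).indicator 1 x ∂volume :=
    (ae_restrict_mem hΓ''m).mono fun xb hxb => key xb hxb
  have hLHS : (∫⁻ xb in Γ'', ENNReal.ofReal (nuM Ω s p u (ball xb δ)) ∂μH[t]) =
      ∫⁻ xb in Γ'', (∫⁻ x in T, F x * (ball xb δ).indicator 1 x ∂volume) ∂μH[t] :=
    lintegral_congr_ae hae
  -- Step B: Tonelli swap
  have hfm : AEMeasurable (Function.uncurry fun (xb x : Euc n) => F x * (ball xb δ).indicator 1 x)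
      ((μH[t].restrict Γ'').prod (volume.restrict T)) := by
    have heq : (Function.uncurry fun (xb x : Euc n) => F x * (ball xb δ).indicator 1 x)
        = fun z : Euc n × Euc n =>
            F z.2 * Set.indicator {z : Euc n × Euc n | dist z.2 z.1 < δ} 1 z := by
      funext z
      show F z.2 * (ball z.1 δ).indicator 1 z.2 = _
      classical
      simp only [Set.indicator_apply, Pi.one_apply, mem_ball, Set.mem_setOf_eq]
    rw [heq]
    refine AEMeasurable.mul
      (hFmeas.comp_quasiMeasurePreserving Measure.quasiMeasurePreserving_snd) ?_
    have hopen : IsOpen {z : Euc n × Euc n | dist z.2 z.1 < δ} :=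
      isOpen_lt (continuous_dist.comp (continuous_snd.prodMk continuous_fst)) continuous_const
    exact (measurable_one.indicator hopen.measurableSet).aemeasurable
  rw [hLHS]
  refine le_trans (le_of_eq (lintegral_lintegral_swap hfm)) ?_
  -- Step C: compute and bound the inner integral
  have hK : ∀ x : Euc n,
      (∫⁻ xb in Γ'', F x * (ball x δ).indicator 1 xb ∂μH[t]) ≤
        F x * ENNReal.ofReal (AΓ * (2 * δ) ^ t) := by
    intro x
    rw [lintegral_const_mul' _ _ ENNReal.ofReal_ne_top, lintegral_indicator_one measurableSet_ball]
    refine mul_le_mul_right ?_ _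
    rw [Measure.restrict_apply measurableSet_ball]
    rcases Set.eq_empty_or_nonempty (ball x δ ∩ Γ'') with h | ⟨y, hy⟩
    · simp [h]
    · have hsub : ball x δ ∩ Γ'' ⊆ Γ ∩ ball y (2 * δ) := by
        intro z hz
        refine ⟨hΓ''Γ hz.2, mem_ball.2 ?_⟩
        have h1 : dist z x < δ := mem_ball.1 hz.1
        have h2 : dist x y < δ := by rw [dist_comm]; exact mem_ball.1 hy.1
        exact lt_of_le_of_lt (dist_triangle z x y) (by linarith)
      exact le_trans (measure_mono hsub) (hAhl y (hΓ''Γ hy.2) (2 * δ) (by linarith))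
  have hswap : ∀ᵐ x ∂(volume.restrict T),
      (∫⁻ xb in Γ'', F x * (ball xb δ).indicator 1 x ∂μH[t]) ≤
        F x * ENNReal.ofReal (AΓ * (2 * δ) ^ t) := by
    refine Filter.Eventually.of_forall fun x => le_trans (le_of_eq ?_) (hK x)
    refine lintegral_congr fun xb => ?_
    classical
    simp only [Set.indicator_apply, Pi.one_apply, mem_ball]
    rw [dist_comm]
  refine le_trans (lintegral_mono_ae hswap) ?_
  rw [lintegral_mul_const' _ _ ENNReal.ofReal_ne_top]
  have hnuT : (∫⁻ x in T, F x ∂volume) =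
      ENNReal.ofReal (nuM Ω s p u (thickening (2 * δ) Γ'')) := by
    rw [nuM, ofReal_integral_eq_lintegral_ofReal hFint (Filter.Eventually.of_forall hnn)]
  rw [hnuT]
  have hnuTnn : 0 ≤ nuM Ω s p u (thickening (2 * δ) Γ'') := integral_nonneg fun x => hnn x
  rw [← ENNReal.ofReal_mul hnuTnn]
  refine ENNReal.ofReal_le_ofReal (le_of_eq ?_)
  rw [Real.mul_rpow (by norm_num) hδ0.le]
  ring
end
end
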